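/- arXiv:1907.06019 — 3 statements merged into one kernel-verified Lean document; each statement's English description precedes it below -/
import Mathlib

section
/- Let V = ℝ^n, let d ≥ 0 and 0 < r ≤ n - d, let W be a linear subspace of ⋀^r V, and let F be an invertible n×n real matrix. Then there exists a subset J of {1,…,n} with |J| = n - d such that dim π^F_J(W) / C(n-d, r) ≥ (dim W) / C(n, r). -/
/-- The projection `π^F_J : ℝ^n → span{f_j : j ∈ J}` determined by the columns
`f_1, …, f_n` of `F`: it fixes `f_j` for `j ∈ J` and kills `f_j` for `j ∉ J`. -/
noncomputable def projMap (n : ℕ) (F : Matrix (Fin n) (Fin n) ℝ) (J : Finset (Fin n)) :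
    (Fin n → ℝ) →ₗ[ℝ] (Fin n → ℝ) :=
  Matrix.toLin' (F * Matrix.diagonal (fun j => if j ∈ J then (1 : ℝ) else 0) * F⁻¹)

namespace ProjAux

variable {n : ℕ} (F : Matrix (Fin n) (Fin n) ℝ)

/-- the `j`-th column of `F` as a vector -/
noncomputable def col (j : Fin n) : Fin n → ℝ := Matrix.toLin' F (Pi.single j 1)

variable (r : ℕ)

/-- wedge monomials in the columns of `F` -/
noncomputable def mon (K : {s : Finset (Fin n) // s.card = r}) :
    ExteriorAlgebra ℝ (Fin n → ℝ) :=
  ExteriorAlgebra.ιMulti_family ℝ r (col F) K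

/-- the alternating form computing the `K`-coordinate -/
noncomputable def alt (K : {s : Finset (Fin n) // s.card = r}) :
    (Fin n → ℝ) [⋀^Fin r]→ₗ[ℝ] ℝ :=
  (Matrix.detRowAlternating).compLinearMap
    ((LinearMap.funLeft ℝ ℝ (fun i => (Finset.orderIsoOfFin K.1 K.2 i : Fin n))) ∘ₗ
      Matrix.toLin' F⁻¹)

/-- the `K`-coordinate functional on the exterior algebra -/
noncomputable def phi (K : {s : Finset (Fin n) // s.card = r}) :
    ExteriorAlgebra ℝ (Fin n → ℝ) →ₗ[ℝ] ℝ :=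
  ExteriorAlgebra.liftAlternating
    (Function.update (fun i => (0 : (Fin n → ℝ) [⋀^Fin i]→ₗ[ℝ] ℝ)) r (alt F r K))

lemma phi_ιMulti (K : {s : Finset (Fin n) // s.card = r}) (v : Fin r → (Fin n → ℝ)) :
    phi F r K (ExteriorAlgebra.ιMulti ℝ r v) = alt F r K v := by
  rw [phi, ExteriorAlgebra.liftAlternating_apply_ιMulti, Function.update_self]

variable {F}

lemma inv_col (hF : IsUnit F) (j : Fin n) :
    Matrix.toLin' F⁻¹ (col F j) = Pi.single j 1 := by
  have h : F⁻¹ * F = 1 := Matrix.nonsing_inv_mul F ((Matrix.isUnit_iff_isUnit_det F).mp hF)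
  rw [col, Matrix.toLin'_apply, Matrix.toLin'_apply, Matrix.mulVec_mulVec, h,
    Matrix.one_mulVec]

lemma projMap_col (hF : IsUnit F) (J : Finset (Fin n)) (j : Fin n) :
    projMap n F J (col F j) = if j ∈ J then col F j else 0 := by
  have h : F⁻¹ * F = 1 := Matrix.nonsing_inv_mul F ((Matrix.isUnit_iff_isUnit_det F).mp hF)
  simp only [projMap, col, Matrix.toLin'_apply, Matrix.mulVec_mulVec]
  rw [Matrix.mul_assoc, Matrix.mul_assoc, h, Matrix.mul_one, ← Matrix.mulVec_mulVec,
    Matrix.diagonal_mulVec_single]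
  split_ifs with hj
  · simp
  · simp

lemma detRow_eq (v : Fin r → (Fin r → ℝ)) :
    Matrix.detRowAlternating v = Matrix.det (Matrix.of v) := rfl

lemma phi_mon (hF : IsUnit F) (K L : {s : Finset (Fin n) // s.card = r}) :
    phi F r K (mon F r L) = if K = L then 1 else 0 := by
  rw [show mon F r L = ExteriorAlgebra.ιMulti ℝ r (fun i => col F (Finset.orderIsoOfFin L.1 L.2 i : Fin n)) from rfl, phi_ιMulti, alt]
  simp only [AlternatingMap.compLinearMap_apply, LinearMap.comp_apply]
  have hsingle : ∀ i, (Matrix.toLin' F⁻¹) (col F ((Finset.orderIsoOfFin L.1 L.2 i : Fin n))) =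
      Pi.single ((Finset.orderIsoOfFin L.1 L.2 i : Fin n)) 1 := fun i => inv_col hF _
  simp only [hsingle]
  rw [detRow_eq]
  split_ifs with hKL
  · subst hKL
    have h1 : (Matrix.of fun i => LinearMap.funLeft ℝ ℝ
        (fun i => ((Finset.orderIsoOfFin K.1 K.2 i : Fin n)))
        (Pi.single ((Finset.orderIsoOfFin K.1 K.2 i : Fin n)) 1)) =
        (1 : Matrix (Fin r) (Fin r) ℝ) := by
      ext i j
      simp only [Matrix.of_apply, LinearMap.funLeft_apply, Pi.single_apply, Matrix.one_apply]
      congr 1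
      simp only [eq_iff_iff]
      constructor
      · intro h
        exact ((Finset.orderIsoOfFin K.1 K.2).injective (Subtype.ext h)).symm
      · rintro rfl; rfl
    rw [h1, Matrix.det_one]
  · have hne : ¬ L.1 ⊆ K.1 := by
      intro h
      exact hKL (Subtype.ext (Finset.eq_of_subset_of_card_le h (le_of_eq (K.2.trans L.2.symm))).symm)
    obtain ⟨l, hlL, hlK⟩ := Finset.not_subset.mp hne
    apply Matrix.det_eq_zero_of_row_eq_zero ((Finset.orderIsoOfFin L.1 L.2).symm ⟨l, hlL⟩)
    intro j
    simp only [Matrix.of_apply, LinearMap.funLeft_apply, OrderIso.apply_symm_apply,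
      Pi.single_apply]
    rw [if_neg]
    intro h
    exact hlK (h ▸ (Finset.orderIsoOfFin K.1 K.2 j).2)

lemma map_proj_mon (hF : IsUnit F) (J : Finset (Fin n)) (L : {s : Finset (Fin n) // s.card = r}) :
    ExteriorAlgebra.map (projMap n F J) (mon F r L) = if L.1 ⊆ J then mon F r L else 0 := by
  rw [show mon F r L = ExteriorAlgebra.ιMulti ℝ r (fun i => col F (Finset.orderIsoOfFin L.1 L.2 i : Fin n)) from rfl, ExteriorAlgebra.map_apply_ιMulti]
  split_ifs with hJ
  · congr 1
    funext i
    simp only [Function.comp_apply]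
    rw [projMap_col hF, if_pos (hJ (Finset.orderIsoOfFin L.1 L.2 i).2)]
  · obtain ⟨l, hlL, hlJ⟩ := Finset.not_subset.mp hJ
    apply AlternatingMap.map_coord_zero _ ((Finset.orderIsoOfFin L.1 L.2).symm ⟨l, hlL⟩)
    simp only [Function.comp_apply, OrderIso.apply_symm_apply]
    rw [projMap_col hF, if_neg hlJ]

lemma ιMulti_mem_span (hF : IsUnit F) (v : Fin r → (Fin n → ℝ)) :
    ExteriorAlgebra.ιMulti ℝ r v ∈ Submodule.span ℝ (Set.range (mon F r)) := by
  classical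
  have hinv : Invertible F := Matrix.invertibleOfIsUnitDet F
    ((Matrix.isUnit_iff_isUnit_det F).mp hF)
  let e : (Fin n → ℝ) ≃ₗ[ℝ] (Fin n → ℝ) := Matrix.toLinearEquiv' F hinv
  let b : Module.Basis (Fin n) ℝ (Fin n → ℝ) := (Pi.basisFun ℝ (Fin n)).map e
  have hb : ∀ j, b j = col F j := by
    intro j
    simp only [b, Module.Basis.map_apply, Pi.basisFun_apply, col]
    rfl
  set f := ExteriorAlgebra.ιMulti ℝ (M := Fin n → ℝ) r with hf
  set a : Fin r → Fin n → ℝ := fun i j => b.repr (v i) j with ha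
  have hv : v = fun i => ∑ j, a i j • col F j := by
    funext i
    conv_lhs => rw [← b.sum_repr (v i)]
    simp only [hb, ha]
  -- key fact: each pure monomial in the columns lies in the span
  have hcol : ∀ p : Fin r → Fin n, f (col F ∘ p) ∈ Submodule.span ℝ (Set.range (mon F r)) := by
    intro p
    by_cases hp : Function.Injective p
    · have hP : (Finset.image p Finset.univ).card = r := by
        rw [Finset.card_image_of_injective _ hp, Finset.card_univ, Fintype.card_fin]
      set P : Finset (Fin n) := Finset.image p Finset.univ with hPdef
      have hmem : ∀ i, p i ∈ P := fun i => Finset.mem_image_of_mem p (Finset.mem_univ i)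
      have hbij : Function.Bijective (fun i => (⟨p i, hmem i⟩ : {x // x ∈ P})) := by
        rw [Fintype.bijective_iff_injective_and_card]
        constructor
        · intro i j hij
          exact hp (congrArg Subtype.val hij)
        · rw [Fintype.card_coe, hP, Fintype.card_fin]
      let eqv : Fin r ≃ {x // x ∈ P} := Equiv.ofBijective _ hbij
      let σ : Equiv.Perm (Fin r) := eqv.trans (Finset.orderIsoOfFin P hP).toEquiv.symm
      have hcomp : (col F ∘ p) =
          (fun i => col F ((Finset.orderIsoOfFin P hP i : Fin n))) ∘ σ := by
        funext i
        simp only [Function.comp_apply, σ, Equiv.trans_apply]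
        congr 1
        have : Finset.orderIsoOfFin P hP ((Finset.orderIsoOfFin P hP).toEquiv.symm (eqv i))
            = eqv i := (Finset.orderIsoOfFin P hP).apply_symm_apply _
        rw [this]
        rfl
      rw [hcomp, AlternatingMap.map_perm]
      rcases Int.units_eq_one_or (Equiv.Perm.sign σ) with hs | hs
      · rw [hs, one_smul]
        exact Submodule.subset_span ⟨⟨P, hP⟩, rfl⟩
      · rw [hs]
        rw [Units.neg_smul, one_smul]
        exact Submodule.neg_mem _ (Submodule.subset_span ⟨⟨P, hP⟩, rfl⟩)
    · simp only [Function.Injective, not_forall] at hp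
      obtain ⟨i, j, hij, hne⟩ := hp
      have : (col F ∘ p) i = (col F ∘ p) j := by simp [Function.comp_apply, hij]
      rw [AlternatingMap.map_eq_zero_of_eq f _ this hne]
      exact Submodule.zero_mem _
  rw [hv]
  have expand := MultilinearMap.map_sum (f.toMultilinearMap)
    (g := fun i j => a i j • col F j)
  rw [show f (fun i => ∑ j, a i j • col F j)
      = f.toMultilinearMap (fun i => ∑ j, a i j • col F j) from rfl, expand]
  apply Submodule.sum_mem
  intro p _
  have : f.toMultilinearMap (fun i => a i (p i) • col F (p i))
      = (∏ i, a i (p i)) • f (col F ∘ p) := by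
    rw [MultilinearMap.map_smul_univ]
    rfl
  rw [this]
  exact Submodule.smul_mem _ _ (hcol p)

lemma span_mon (hF : IsUnit F) :
    (⋀[ℝ]^r (Fin n → ℝ) : Submodule ℝ _) ≤ Submodule.span ℝ (Set.range (mon F r)) := by
  rw [← ExteriorAlgebra.ιMulti_span_fixedDegree, Submodule.span_le]
  rintro _ ⟨v, rfl⟩
  exact ιMulti_mem_span r hF v

lemma phi_map_proj (hF : IsUnit F) (J : Finset (Fin n)) (K : {s : Finset (Fin n) // s.card = r})
    (hK : K.1 ⊆ J) {x : ExteriorAlgebra ℝ (Fin n → ℝ)}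
    (hx : x ∈ Submodule.span ℝ (Set.range (mon F r))) :
    phi F r K (ExteriorAlgebra.map (projMap n F J) x) = phi F r K x := by
  induction hx using Submodule.span_induction with
  | mem y hy =>
    obtain ⟨L, rfl⟩ := hy
    rw [map_proj_mon r hF]
    split_ifs with hL
    · rfl
    · rw [map_zero, phi_mon r hF, if_neg (by rintro rfl; exact hL hK)]
  | zero => simp
  | add x y hx hy ihx ihy => simp [map_add, ihx, ihy]
  | smul a x hx ih => simp [map_smul, ih]

lemma eq_sum_phi (hF : IsUnit F) {x : ExteriorAlgebra ℝ (Fin n → ℝ)}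
    (hx : x ∈ Submodule.span ℝ (Set.range (mon F r))) :
    x = ∑ K : {s : Finset (Fin n) // s.card = r}, phi F r K x • mon F r K := by
  induction hx using Submodule.span_induction with
  | mem y hy =>
    obtain ⟨L, rfl⟩ := hy
    simp only [phi_mon r hF, ite_smul, one_smul, zero_smul]
    rw [Finset.sum_ite_eq' Finset.univ L (fun K => mon F r K), if_pos (Finset.mem_univ L)]
  | zero => simp
  | add x y hx hy ihx ihy =>
    simp only [map_add, add_smul, Finset.sum_add_distrib]
    conv_lhs => rw [ihx, ihy]
  | smul a x hx ih =>
    simp only [map_smul, smul_eq_mul, ← smul_smul, ← Finset.smul_sum]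
    conv_lhs => rw [ih]

lemma eq_zero_of_phi_eq_zero (hF : IsUnit F) {x : ExteriorAlgebra ℝ (Fin n → ℝ)}
    (hx : x ∈ Submodule.span ℝ (Set.range (mon F r))) (h : ∀ K, phi F r K x = 0) : x = 0 := by
  rw [eq_sum_phi r hF hx]
  simp [h]

/-- number of `m`-subsets of `Fin n` containing a fixed `r`-set `K` -/
lemma card_supersets {n m r : ℕ} (hm : r ≤ m) (K : Finset (Fin n)) (hK : K.card = r) :
    ((Finset.powersetCard m (Finset.univ : Finset (Fin n))).filter (fun J => K ⊆ J)).card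
      = (n - r).choose (m - r) := by
  classical
  have h1 : ((Finset.powersetCard m (Finset.univ : Finset (Fin n))).filter
      (fun J => K ⊆ J)).card = (Finset.powersetCard (m - r)
        ((Finset.univ : Finset (Fin n)) \ K)).card := by
    apply Finset.card_bij' (fun J _ => J \ K) (fun J' _ => J' ∪ K)
    · intro J hJ
      rw [Finset.mem_filter, Finset.mem_powersetCard] at hJ
      rw [Finset.mem_powersetCard]
      refine ⟨Finset.sdiff_subset_sdiff hJ.1.1 le_rfl, ?_⟩
      rw [Finset.card_sdiff_of_subset hJ.2, hJ.1.2, hK]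
    · intro J' hJ'
      rw [Finset.mem_powersetCard] at hJ'
      have hdisj : Disjoint J' K := Finset.disjoint_of_subset_left hJ'.1 (Finset.sdiff_disjoint)
      rw [Finset.mem_filter, Finset.mem_powersetCard]
      refine ⟨⟨Finset.subset_univ _, ?_⟩, Finset.subset_union_right⟩
      rw [Finset.card_union_of_disjoint hdisj, hJ'.2, hK]
      omega
    · intro J hJ
      rw [Finset.mem_filter] at hJ
      exact Finset.sdiff_union_of_subset hJ.2
    · intro J' hJ'
      rw [Finset.mem_powersetCard] at hJ'
      exact Finset.union_sdiff_cancel_right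
        (Finset.disjoint_of_subset_left hJ'.1 (Finset.sdiff_disjoint))
  rw [h1, Finset.card_powersetCard, Finset.card_sdiff_of_subset (Finset.subset_univ K),
    Finset.card_univ, Fintype.card_fin, hK]

lemma choose_identity (n m r : ℕ) (hr : r ≤ m) (hm : m ≤ n) :
    n.choose m * m.choose r = n.choose r * (n - r).choose (m - r) := by
  classical
  have key : ∑ J ∈ Finset.powersetCard m (Finset.univ : Finset (Fin n)),
      ((Finset.powersetCard r (Finset.univ : Finset (Fin n))).filter (fun K => K ⊆ J)).card
      = ∑ K ∈ Finset.powersetCard r (Finset.univ : Finset (Fin n)),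
      ((Finset.powersetCard m (Finset.univ : Finset (Fin n))).filter (fun J => K ⊆ J)).card := by
    simp only [Finset.card_filter]
    rw [Finset.sum_comm]
  have hL : ∀ J ∈ Finset.powersetCard m (Finset.univ : Finset (Fin n)),
      ((Finset.powersetCard r (Finset.univ : Finset (Fin n))).filter (fun K => K ⊆ J)).card
        = m.choose r := by
    intro J hJ
    rw [Finset.mem_powersetCard] at hJ
    have : (Finset.powersetCard r (Finset.univ : Finset (Fin n))).filter (fun K => K ⊆ J)
        = Finset.powersetCard r J := by
      ext K
      simp only [Finset.mem_filter, Finset.mem_powersetCard]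
      constructor
      · rintro ⟨⟨-, h2⟩, h3⟩; exact ⟨h3, h2⟩
      · rintro ⟨h1, h2⟩; exact ⟨⟨Finset.subset_univ _, h2⟩, h1⟩
    rw [this, Finset.card_powersetCard, hJ.2]
  have hR : ∀ K ∈ Finset.powersetCard r (Finset.univ : Finset (Fin n)),
      ((Finset.powersetCard m (Finset.univ : Finset (Fin n))).filter (fun J => K ⊆ J)).card
        = (n - r).choose (m - r) := by
    intro K hK
    rw [Finset.mem_powersetCard] at hK
    exact card_supersets hr K hK.2
  rw [Finset.sum_congr rfl hL, Finset.sum_congr rfl hR, Finset.sum_const, Finset.sum_const,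
    Finset.card_powersetCard, Finset.card_powersetCard, Finset.card_univ, Fintype.card_fin,
    smul_eq_mul, smul_eq_mul] at key
  exact key

end ProjAux

/-- The image of a subspace `W` of the exterior algebra under the map induced by
`π^F_J`. -/
noncomputable def projImage (n : ℕ) (F : Matrix (Fin n) (Fin n) ℝ) (J : Finset (Fin n))
    (W : Submodule ℝ (ExteriorAlgebra ℝ (Fin n → ℝ))) :
    Submodule ℝ (ExteriorAlgebra ℝ (Fin n → ℝ)) :=
  Submodule.map (ExteriorAlgebra.map (projMap n F J)).toLinearMap W

set_option maxHeartbeats 2000000 in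
set_option synthInstance.maxHeartbeats 200000 in
/-- For `0 < r ≤ n - d`, `W ⊆ ⋀^r ℝ^n` and invertible `F`, some projection onto an
`(n-d)`-subset of the basis preserves the dimensional fraction. -/
theorem exists_projection_preserving_fraction (n r d : ℕ) (hr : 0 < r) (hrd : r ≤ n - d)
    (W : Submodule ℝ (ExteriorAlgebra ℝ (Fin n → ℝ)))
    (hWle : W ≤ ⋀[ℝ]^r (Fin n → ℝ))
    (F : Matrix (Fin n) (Fin n) ℝ) (hF : IsUnit F) :
    ∃ J : Finset (Fin n), J.card = n - d ∧
      (Module.finrank ℝ (projImage n F J W) : ℝ) / ((n - d).choose r) ≥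
        (Module.finrank ℝ W : ℝ) / (n.choose r) := by
  classical
  have hmn : n - d ≤ n := Nat.sub_le n d
  have hrn : r ≤ n := le_trans hrd hmn
  haveI : FiniteDimensional ℝ (Submodule.span ℝ (Set.range (ProjAux.mon F r))) :=
    FiniteDimensional.span_of_finite ℝ (Set.finite_range _)
  haveI hfd : FiniteDimensional ℝ W :=
    Submodule.finiteDimensional_of_le (le_trans hWle (ProjAux.span_mon r hF))
  haveI : Module.IsReflexive ℝ W := Module.IsReflexive.of_finite_of_free ℝ W
  set u : {s : Finset (Fin n) // s.card = r} → Module.Dual ℝ W :=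
    fun K => (ProjAux.phi F r K) ∘ₗ W.subtype with hu
  have hspan : Submodule.span ℝ (Set.range u) = ⊤ := by
    apply Submodule.span_eq_top_of_ne_zero
    intro z hz
    by_contra hcon
    push_neg at hcon
    apply hz
    have hz0 : (z : ExteriorAlgebra ℝ (Fin n → ℝ)) = 0 :=
      ProjAux.eq_zero_of_phi_eq_zero r hF (ProjAux.span_mon r hF (hWle z.2))
        (fun K => by simpa [hu] using hcon (u K) ⟨K, rfl⟩)
    exact Subtype.ext hz0
  obtain ⟨B, hBsub, hBspan, hBind⟩ := exists_linearIndependent ℝ (Set.range u)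
  have hBtop : ⊤ ≤ Submodule.span ℝ (Set.range ((↑) : B → Module.Dual ℝ W)) := by
    rw [Subtype.range_coe, hBspan, hspan]
  let bas : Module.Basis B ℝ (Module.Dual ℝ W) := Module.Basis.mk hBind hBtop
  haveI : Fintype B := FiniteDimensional.fintypeBasisIndex bas
  have hBcard : Fintype.card B = Module.finrank ℝ W := by
    rw [← Module.finrank_eq_card_basis bas, Subspace.dual_finrank_eq]
  have hchoice : ∀ b : B, ∃ K, u K = (b : Module.Dual ℝ W) := fun b => hBsub b.2
  choose t ht using hchoice
  -- rank bound for each J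
  have hbound : ∀ J : Finset (Fin n),
      (Finset.univ.filter (fun b : B => (t b).1 ⊆ J)).card
        ≤ Module.finrank ℝ (projImage n F J W) := by
    intro J
    set ρ : W →ₗ[ℝ] ExteriorAlgebra ℝ (Fin n → ℝ) :=
      (ExteriorAlgebra.map (projMap n F J)).toLinearMap ∘ₗ W.subtype with hρ
    have hrange : LinearMap.range ρ = projImage n F J W := by
      rw [hρ, LinearMap.range_comp, Submodule.range_subtype]; rfl
    set v : {b : B // (t b).1 ⊆ J} → Module.Dual ℝ (LinearMap.range ρ) :=
      fun b => (ProjAux.phi F r (t b.1)) ∘ₗ (LinearMap.range ρ).subtype with hv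
    have hcomp : ∀ b : {b : B // (t b).1 ⊆ J},
        (ρ.rangeRestrict).dualMap (v b) = ((b : B) : Module.Dual ℝ W) := by
      intro b
      rw [← ht b.1]
      ext x
      exact ProjAux.phi_map_proj r hF J (t b.1) b.2 (ProjAux.span_mon r hF (hWle x.2))
    have hindep : LinearIndependent ℝ v := by
      apply LinearIndependent.of_comp (ρ.rangeRestrict).dualMap
      have heq : ((ρ.rangeRestrict).dualMap ∘ v)
          = fun b : {b : B // (t b).1 ⊆ J} => ((b : B) : Module.Dual ℝ W) := funext hcomp
      rw [heq]
      exact hBind.comp (Subtype.val : {b : B // (t b).1 ⊆ J} → B) Subtype.val_injective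
    calc (Finset.univ.filter (fun b : B => (t b).1 ⊆ J)).card
        = Fintype.card {b : B // (t b).1 ⊆ J} := (Fintype.card_subtype _).symm
      _ ≤ Module.finrank ℝ (Module.Dual ℝ (LinearMap.range ρ)) :=
          hindep.fintype_card_le_finrank
      _ = Module.finrank ℝ (LinearMap.range ρ) := Subspace.dual_finrank_eq
      _ = Module.finrank ℝ (projImage n F J W) := by rw [hrange]
  -- counting
  set 𝒥 := Finset.powersetCard (n - d) (Finset.univ : Finset (Fin n)) with h𝒥
  have h𝒥card : 𝒥.card = n.choose (n - d) := by
    rw [h𝒥, Finset.card_powersetCard, Finset.card_univ, Fintype.card_fin]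
  have h𝒥ne : 𝒥.Nonempty := by
    rw [h𝒥]
    exact Finset.powersetCard_nonempty.mpr (by rw [Finset.card_univ, Fintype.card_fin]; exact hmn)
  have hsum : ∑ J ∈ 𝒥, (Finset.univ.filter (fun b : B => (t b).1 ⊆ J)).card
      = Module.finrank ℝ W * (n - r).choose ((n - d) - r) := by
    simp only [Finset.card_filter]
    rw [Finset.sum_comm]
    have hinner : ∀ b : B, (∑ J ∈ 𝒥, if (t b).1 ⊆ J then 1 else 0)
        = (n - r).choose ((n - d) - r) := by
      intro b
      rw [← Finset.card_filter]
      exact ProjAux.card_supersets hrd (t b).1 (t b).2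
    rw [Finset.sum_congr rfl (fun b _ => hinner b), Finset.sum_const, smul_eq_mul,
      Finset.card_univ, hBcard]
  have hpigeon : ∃ J ∈ 𝒥, Module.finrank ℝ W * (n - r).choose ((n - d) - r)
      ≤ 𝒥.card * (Finset.univ.filter (fun b : B => (t b).1 ⊆ J)).card := by
    apply Finset.exists_le_of_sum_le h𝒥ne
    rw [Finset.sum_const, smul_eq_mul, ← Finset.mul_sum, hsum]
  obtain ⟨J, hJ𝒥, hJ⟩ := hpigeon
  have hJcard : J.card = n - d := (Finset.mem_powersetCard.mp hJ𝒥).2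
  refine ⟨J, hJcard, ?_⟩
  have step1 : Module.finrank ℝ W * (n - r).choose ((n - d) - r)
      ≤ n.choose (n - d) * Module.finrank ℝ (projImage n F J W) :=
    le_trans hJ (by rw [h𝒥card]; exact Nat.mul_le_mul_left _ (hbound J))
  have hkey : Module.finrank ℝ W * (n - d).choose r
      ≤ Module.finrank ℝ (projImage n F J W) * n.choose r := by
    have hid := ProjAux.choose_identity n (n - d) r hrd hmn
    have h2 : n.choose (n - d) * (Module.finrank ℝ W * (n - d).choose r)
        ≤ n.choose (n - d) * (Module.finrank ℝ (projImage n F J W) * n.choose r) := by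
      calc n.choose (n - d) * (Module.finrank ℝ W * (n - d).choose r)
          = Module.finrank ℝ W * (n.choose (n - d) * (n - d).choose r) := by ring
        _ = Module.finrank ℝ W * (n.choose r * (n - r).choose ((n - d) - r)) := by rw [hid]
        _ = (Module.finrank ℝ W * (n - r).choose ((n - d) - r)) * n.choose r := by ring
        _ ≤ (n.choose (n - d) * Module.finrank ℝ (projImage n F J W)) * n.choose r :=
            Nat.mul_le_mul_right _ step1
        _ = n.choose (n - d) * (Module.finrank ℝ (projImage n F J W) * n.choose r) := by ring
    exact Nat.le_of_mul_le_mul_left h2 (Nat.choose_pos hmn)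
  have hc1 : (0:ℝ) < (n.choose r : ℝ) := by exact_mod_cast Nat.choose_pos hrn
  have hc2 : (0:ℝ) < ((n - d).choose r : ℝ) := by exact_mod_cast Nat.choose_pos hrd
  rw [ge_iff_le, div_le_div_iff₀ hc1 hc2]
  exact_mod_cast hkey
end

section
/- Let V = ℝ^n, let 0 < d ≤ n and 0 < r ≤ n - d, and let W be a linear subspace of ⋀^r V. Then there exists a nonzero real polynomial H in n² variables such that whenever H(F) ≠ 0, the matrix F is invertible and dim π^F_{[n-d]}(W) / C(n-d, r) ≥ (dim W) / C(n, r), where [n-d] = {1, …, n-d}. -/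
open ExteriorAlgebra Matrix

namespace GenProj



variable {n r : ℕ}

/-- standard basis vector -/
noncomputable def std (j : Fin n) : Fin n → ℝ := fun j' => if j = j' then 1 else 0

abbrev Sets (n r : ℕ) := {s : Finset (Fin n) // s.card = r}

/-- basis monomials of the r-th exterior power -/
noncomputable def eS (S : Sets n r) : ExteriorAlgebra ℝ (Fin n → ℝ) :=
  ιMulti ℝ r fun i => std ((S.1.orderIsoOfFin S.2 i : Fin n))

noncomputable def altS (S : Sets n r) : (Fin n → ℝ) [⋀^Fin r]→ₗ[ℝ] ℝ :=
  (Matrix.detRowAlternating).compLinearMap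
    (LinearMap.funLeft ℝ ℝ (fun i : Fin r => (S.1.orderIsoOfFin S.2 i : Fin n)))

/-- coordinate functionals -/
noncomputable def cS (S : Sets n r) : ExteriorAlgebra ℝ (Fin n → ℝ) →ₗ[ℝ] ℝ :=
  liftAlternating (Function.update (fun i => (0 : (Fin n → ℝ) [⋀^Fin i]→ₗ[ℝ] ℝ)) r (altS S))

lemma cS_ιMulti (S : Sets n r) (v : Fin r → (Fin n → ℝ)) :
    cS S (ιMulti ℝ r v) = Matrix.det (Matrix.of fun i j => v i ((S.1.orderIsoOfFin S.2 j : Fin n))) := by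
  rw [cS, liftAlternating_apply_ιMulti, Function.update_self]
  rfl

lemma cS_eS (S S' : Sets n r) : cS S (eS S') = if S' = S then 1 else 0 := by
  rw [eS, cS_ιMulti]
  split_ifs with h
  · subst h
    have : (Matrix.of fun i j => std ((S'.1.orderIsoOfFin S'.2 i : Fin n))
        ((S'.1.orderIsoOfFin S'.2 j : Fin n))) = (1 : Matrix (Fin r) (Fin r) ℝ) := by
      ext i j
      simp only [Matrix.of_apply, std, Matrix.one_apply]
      by_cases hij : i = j
      · simp [hij]
      · have h2 : ((S'.1.orderIsoOfFin S'.2 i : Fin n)) ≠ ((S'.1.orderIsoOfFin S'.2 j : Fin n)) := by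
          intro hc
          exact hij ((S'.1.orderIsoOfFin S'.2).injective (Subtype.ext hc))
        simp [h2, hij]
    rw [this, Matrix.det_one]
  · -- there is an element of S not in S'
    have hne : ¬ (S.1 ⊆ S'.1) := by
      intro hsub
      exact h (Subtype.ext (Finset.eq_of_subset_of_card_le hsub (le_of_eq (S'.2.trans S.2.symm))).symm)
    obtain ⟨x, hxS, hxS'⟩ := Finset.not_subset.1 hne
    obtain ⟨j0, hj0⟩ := (S.1.orderIsoOfFin S.2).surjective ⟨x, hxS⟩
    apply Matrix.det_eq_zero_of_column_eq_zero j0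
    intro i
    have hx' : ((S.1.orderIsoOfFin S.2 j0 : Fin n)) = x := by rw [hj0]
    have h3 : ((S'.1.orderIsoOfFin S'.2 i : Fin n)) ≠ x := by
      intro hc
      exact hxS' (hc ▸ (S'.1.orderIsoOfFin S'.2 i).2)
    simp only [Matrix.of_apply, std, hx']
    rw [if_neg h3]

lemma cS_map_diag {J : Finset (Fin n)} {S : Sets n r} (hSJ : S.1 ⊆ J)
    {w : ExteriorAlgebra ℝ (Fin n → ℝ)} (hw : w ∈ ⋀[ℝ]^r (Fin n → ℝ)) :
    cS S (ExteriorAlgebra.map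
      (Matrix.toLin' (Matrix.diagonal fun j => if j ∈ J then (1:ℝ) else 0)) w) = cS S w := by
  rw [← ιMulti_span_fixedDegree] at hw
  induction hw using Submodule.span_induction with
  | mem x hx =>
    obtain ⟨v, rfl⟩ := hx
    rw [map_apply_ιMulti, cS_ιMulti, cS_ιMulti]
    congr 1
    ext i j
    simp only [Matrix.of_apply, Function.comp_apply, Matrix.toLin'_apply, Matrix.mulVec_diagonal]
    rw [if_pos (hSJ (S.1.orderIsoOfFin S.2 j).2), one_mul]
  | zero => simp
  | add x y hx hy ihx ihy => simp [map_add, ihx, ihy]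
  | smul c x hx ih => simp [_root_.map_smul, ih]

lemma exteriorPower_le_span :
    ⋀[ℝ]^r (Fin n → ℝ) ≤ Submodule.span ℝ (Set.range (eS (n := n) (r := r))) := by
  rw [← ιMulti_span_fixedDegree]
  rw [Submodule.span_le]
  rintro _ ⟨v, rfl⟩
  have hv : (ιMulti ℝ r v : ExteriorAlgebra ℝ (Fin n → ℝ)) =
      ∑ h : Fin r → Fin n, (∏ i, v i (h i)) • ιMulti ℝ r (fun i => std (h i)) := by
    have hv' : v = fun i => ∑ j, v i j • std j := by
      funext i
      exact pi_eq_sum_univ (v i)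
    conv_lhs => rw [hv']
    rw [← AlternatingMap.coe_multilinearMap]
    rw [MultilinearMap.map_sum ((ιMulti ℝ r).toMultilinearMap) (fun i j => v i j • std j)]
    refine Finset.sum_congr rfl fun h _ => ?_
    rw [MultilinearMap.map_smul_univ]
  rw [hv]
  refine Submodule.sum_mem _ fun h _ => Submodule.smul_mem _ _ ?_
  by_cases hinj : Function.Injective h
  · -- reorder into a monomial
    set Sh : Sets n r := ⟨Finset.univ.image h, by
      rw [Finset.card_image_of_injective _ hinj, Finset.card_univ, Fintype.card_fin]⟩ with hSh
    have hmem : ∀ i, h i ∈ Sh.1 := fun i => Finset.mem_image_of_mem h (Finset.mem_univ i)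
    set σ : Fin r → Fin r := fun i => (Sh.1.orderIsoOfFin Sh.2).symm ⟨h i, hmem i⟩ with hσ
    have hσinj : Function.Injective σ := by
      intro a b hab
      apply hinj
      have := congrArg (Sh.1.orderIsoOfFin Sh.2) hab
      simpa [hσ] using congrArg Subtype.val this
    have hbij := (Finite.injective_iff_bijective).1 hσinj
    set σe : Equiv.Perm (Fin r) := Equiv.ofBijective σ hbij with hσe
    have hcomp : (fun i => std ((Sh.1.orderIsoOfFin Sh.2 i : Fin n))) ∘ σe = fun i => std (h i) := by
      funext i
      simp only [Function.comp_apply, hσe, Equiv.ofBijective_apply, hσ]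
      have := congrArg Subtype.val ((Sh.1.orderIsoOfFin Sh.2).apply_symm_apply ⟨h i, hmem i⟩)
      exact congrArg std this
    have : ιMulti ℝ r (fun i => std (h i)) = Equiv.Perm.sign σe • eS Sh := by
      rw [← hcomp, AlternatingMap.map_perm]
      rfl
    rw [this]
    rcases Int.units_eq_one_or (Equiv.Perm.sign σe) with hs | hs
    · rw [hs, one_smul]
      exact Submodule.subset_span ⟨Sh, rfl⟩
    · rw [hs]
      have : ((-1 : ℤˣ) • eS Sh) = -(eS Sh) := by
        rw [Units.smul_def]
        norm_num
      rw [this]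
      exact Submodule.neg_mem _ (Submodule.subset_span ⟨Sh, rfl⟩)
  · have hninj : ¬ Function.Injective (fun i => std (h i)) := by
      intro hc
      exact hinj (fun a b hab => hc (congrArg std hab))
    rw [(ιMulti ℝ r).map_eq_zero_of_not_injective _ hninj]
    exact Submodule.zero_mem _

lemma map_smul_linear (c : ℝ) (L : (Fin n → ℝ) →ₗ[ℝ] (Fin n → ℝ))
    {w : ExteriorAlgebra ℝ (Fin n → ℝ)} (hw : w ∈ ⋀[ℝ]^r (Fin n → ℝ)) :
    ExteriorAlgebra.map (c • L) w = c ^ r • ExteriorAlgebra.map L w := by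
  rw [← ιMulti_span_fixedDegree] at hw
  induction hw using Submodule.span_induction with
  | mem x hx =>
    obtain ⟨v, rfl⟩ := hx
    rw [map_apply_ιMulti, map_apply_ιMulti]
    have : ((c • L) ∘ v) = fun i => c • (L ∘ v) i := by
      funext i; simp
    rw [this, ← AlternatingMap.coe_multilinearMap,
      MultilinearMap.map_smul_univ ((ιMulti ℝ r).toMultilinearMap) (fun _ => c)]
    simp [Finset.prod_const]
  | zero => simp
  | add x y hx hy ihx ihy => simp [map_add, ihx, ihy, smul_add]
  | smul a x hx ih => rw [_root_.map_smul, _root_.map_smul, ih, smul_comm]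



variable {n r : ℕ}

noncomputable def evalM (n : ℕ) (F : Matrix (Fin n) (Fin n) ℝ) :
    MvPolynomial (Fin n × Fin n) ℝ →+* ℝ :=
  MvPolynomial.eval (fun p => F p.1 p.2)

noncomputable def std' (j : Fin n) : Fin n → ℝ := fun j' => if j = j' then 1 else 0

def IsPolyVec (f : Matrix (Fin n) (Fin n) ℝ → ExteriorAlgebra ℝ (Fin n → ℝ)) : Prop :=
  ∃ (ι : Type) (_ : Fintype ι), ∃ (z : ι → ExteriorAlgebra ℝ (Fin n → ℝ))
    (p : ι → MvPolynomial (Fin n × Fin n) ℝ),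
    ∀ F, f F = ∑ i, evalM n F (p i) • z i

lemma IsPolyVec.const (w : ExteriorAlgebra ℝ (Fin n → ℝ)) : IsPolyVec (fun _ => w) := by
  refine ⟨PUnit, inferInstance, fun _ => w, fun _ => 1, fun F => ?_⟩
  simp

lemma IsPolyVec.add {f g : Matrix (Fin n) (Fin n) ℝ → ExteriorAlgebra ℝ (Fin n → ℝ)}
    (hf : IsPolyVec f) (hg : IsPolyVec g) : IsPolyVec (fun F => f F + g F) := by
  obtain ⟨ι₁, _, z₁, p₁, h₁⟩ := hf
  obtain ⟨ι₂, _, z₂, p₂, h₂⟩ := hg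
  refine ⟨ι₁ ⊕ ι₂, inferInstance, Sum.elim z₁ z₂, Sum.elim p₁ p₂, fun F => ?_⟩
  show f F + g F = _
  rw [h₁ F, h₂ F, Fintype.sum_sum_type]
  rfl

lemma IsPolyVec.mul {f g : Matrix (Fin n) (Fin n) ℝ → ExteriorAlgebra ℝ (Fin n → ℝ)}
    (hf : IsPolyVec f) (hg : IsPolyVec g) : IsPolyVec (fun F => f F * g F) := by
  obtain ⟨ι₁, _, z₁, p₁, h₁⟩ := hf
  obtain ⟨ι₂, _, z₂, p₂, h₂⟩ := hg
  refine ⟨ι₁ × ι₂, inferInstance, fun i => z₁ i.1 * z₂ i.2, fun i => p₁ i.1 * p₂ i.2, fun F => ?_⟩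
  show f F * g F = _
  rw [h₁ F, h₂ F, Finset.sum_mul_sum, Fintype.sum_prod_type]
  refine Finset.sum_congr rfl fun i _ => Finset.sum_congr rfl fun j _ => ?_
  rw [smul_mul_smul_comm, _root_.map_mul]

lemma isPolyVec_map (Q : Matrix (Fin n) (Fin n) (MvPolynomial (Fin n × Fin n) ℝ))
    (w : ExteriorAlgebra ℝ (Fin n → ℝ)) :
    IsPolyVec (fun F => ExteriorAlgebra.map (Matrix.toLin' (Q.map (evalM n F))) w) := by
  induction w using CliffordAlgebra.induction with
  | algebraMap c =>
    have : (fun F => ExteriorAlgebra.map (Matrix.toLin' (Q.map (evalM n F)))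
        (algebraMap ℝ _ c)) = fun _ => algebraMap ℝ (ExteriorAlgebra ℝ (Fin n → ℝ)) c := by
      funext F
      exact AlgHom.commutes _ c
    rw [this]
    exact IsPolyVec.const _
  | ι m =>
    refine ⟨Fin n, inferInstance, fun j => ExteriorAlgebra.ι ℝ (std' j),
      fun j => ∑ l, Q j l * MvPolynomial.C (m l), fun F => ?_⟩
    show ExteriorAlgebra.map (Matrix.toLin' (Q.map (evalM n F))) (ExteriorAlgebra.ι ℝ m) = _
    rw [map_apply_ι]
    have h2 : (Matrix.toLin' (Q.map (evalM n F)) m) = ∑ j, ((Q.map (evalM n F)).mulVec m j) • std' j := by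
      have := pi_eq_sum_univ ((Q.map (evalM n F)).mulVec m)
      rw [Matrix.toLin'_apply]
      convert this using 2
      rfl
    rw [h2, map_sum]
    refine Finset.sum_congr rfl fun j _ => ?_
    rw [LinearMap.map_smul]
    congr 1
    simp only [Matrix.mulVec, dotProduct, Matrix.map_apply, map_sum, evalM]
    refine Finset.sum_congr rfl fun l _ => ?_
    rw [_root_.map_mul, MvPolynomial.eval_C]
  | mul a b ha hb =>
    have : (fun F => ExteriorAlgebra.map (Matrix.toLin' (Q.map (evalM n F))) (a * b)) =
        fun F => (ExteriorAlgebra.map (Matrix.toLin' (Q.map (evalM n F))) a) *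
          (ExteriorAlgebra.map (Matrix.toLin' (Q.map (evalM n F))) b) := by
      funext F; exact map_mul _ a b
    rw [this]
    exact IsPolyVec.mul ha hb
  | add a b ha hb =>
    have : (fun F => ExteriorAlgebra.map (Matrix.toLin' (Q.map (evalM n F))) (a + b)) =
        fun F => (ExteriorAlgebra.map (Matrix.toLin' (Q.map (evalM n F))) a) +
          (ExteriorAlgebra.map (Matrix.toLin' (Q.map (evalM n F))) b) := by
      funext F; exact map_add _ a b
    rw [this]
    exact IsPolyVec.add ha hb

lemma exists_poly_coord (Q : Matrix (Fin n) (Fin n) (MvPolynomial (Fin n × Fin n) ℝ))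
    (w : ExteriorAlgebra ℝ (Fin n → ℝ)) (φ : ExteriorAlgebra ℝ (Fin n → ℝ) →ₗ[ℝ] ℝ) :
    ∃ q : MvPolynomial (Fin n × Fin n) ℝ, ∀ F,
      evalM n F q = φ (ExteriorAlgebra.map (Matrix.toLin' (Q.map (evalM n F))) w) := by
  obtain ⟨ι, _, z, p, h⟩ := isPolyVec_map Q w
  refine ⟨∑ i, p i * MvPolynomial.C (φ (z i)), fun F => ?_⟩
  have hF := h F
  simp only at hF
  rw [hF, map_sum φ, map_sum (evalM n F)]
  refine Finset.sum_congr rfl fun i _ => ?_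
  rw [_root_.map_mul, LinearMap.map_smul]
  have : (evalM n F) (MvPolynomial.C (φ (z i))) = φ (z i) := MvPolynomial.eval_C _
  rw [this]
  simp [mul_comm]



variable {n r : ℕ}

noncomputable def std'' (j : Fin n) : Fin n → ℝ := fun j' => if j = j' then 1 else 0

/-- selection of pivot coordinates -/
lemma exists_good_coords {ι : Type} [Fintype ι] [DecidableEq ι]
    {V : Type} [AddCommGroup V] [Module ℝ V] [FiniteDimensional ℝ V]
    (f : V →ₗ[ℝ] (ι → ℝ)) (hf : Function.Injective f) :
    ∃ T : Finset ι, T.card = Module.finrank ℝ V ∧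
      ∀ v : V, (∀ i ∈ T, f v i = 0) → v = 0 := by
  classical
  set φfun : ι → Module.Dual ℝ V := fun i => (LinearMap.proj i).comp f with hφfun
  have hspan : Submodule.span ℝ (Set.range φfun) = ⊤ := by
    rw [← top_le_iff]
    intro ξ _
    obtain ⟨η, hη⟩ := LinearMap.dualMap_surjective_of_injective hf ξ
    have hξ : ξ = ∑ i, η (fun j => if i = j then (1:ℝ) else 0) • φfun i := by
      ext v
      have h1 : ξ v = η (f v) := by rw [← hη]; rfl
      have h2 : f v = ∑ i, f v i • (fun j => if i = j then (1:ℝ) else 0) := pi_eq_sum_univ (f v)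
      rw [h1, h2, map_sum]
      rw [LinearMap.sum_apply]
      refine Finset.sum_congr rfl fun i _ => ?_
      rw [LinearMap.map_smul, LinearMap.smul_apply]
      simp only [hφfun, LinearMap.comp_apply, LinearMap.proj_apply, smul_eq_mul]
      ring
    rw [hξ]
    exact Submodule.sum_mem _ fun i _ =>
      Submodule.smul_mem _ _ (Submodule.subset_span ⟨i, rfl⟩)
  obtain ⟨t, hts, htsp, hti⟩ := exists_linearIndependent ℝ (Set.range φfun)
  rw [hspan] at htsp
  have htfin : t.Finite := by
    have : Finite ↥t := hti.finite
    exact Set.toFinite t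
  haveI : Fintype ↑t := htfin.fintype
  have hcard : t.toFinset.card = Module.finrank ℝ V := by
    have h1 : Module.finrank ℝ ↥(Submodule.span ℝ t) = t.toFinset.card :=
      finrank_span_set_eq_card hti
    rw [htsp] at h1
    rw [← h1, finrank_top]
    exact Subspace.dual_finrank_eq
  have hchoice : ∀ ψ : {x // x ∈ t.toFinset}, ∃ i, φfun i = ψ.1 := by
    intro ψ
    have : ψ.1 ∈ Set.range φfun := hts (Set.mem_toFinset.1 ψ.2)
    exact this
  set gg : {x // x ∈ t.toFinset} → ι := fun ψ => (hchoice ψ).choose with hgg'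
  have hgg : ∀ ψ, φfun (gg ψ) = ψ.1 := fun ψ => (hchoice ψ).choose_spec
  have hgginj : Function.Injective gg := by
    intro a b hab
    apply Subtype.ext
    rw [← hgg a, ← hgg b, hab]
  refine ⟨t.toFinset.attach.image gg, ?_, ?_⟩
  · rw [Finset.card_image_of_injective _ hgginj, Finset.card_attach, hcard]
  · intro v hv
    have hker : ∀ ψ ∈ t, ψ v = 0 := by
      intro ψ hψ
      have hψ' : ψ ∈ t.toFinset := Set.mem_toFinset.2 hψ
      have h2 : φfun (gg ⟨ψ, hψ'⟩) v = 0 :=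
        hv (gg ⟨ψ, hψ'⟩) (Finset.mem_image_of_mem gg (Finset.mem_attach _ _))
      rw [hgg ⟨ψ, hψ'⟩] at h2
      exact h2
    have hall : ∀ ξ : Module.Dual ℝ V, ξ v = 0 := by
      intro ξ
      have hξ : ξ ∈ Submodule.span ℝ t := htsp ▸ Submodule.mem_top
      induction hξ using Submodule.span_induction with
      | mem x hx => exact hker x hx
      | zero => rfl
      | add x y hx hy ihx ihy => rw [LinearMap.add_apply, ihx, ihy, add_zero]
      | smul c x hx ih => rw [LinearMap.smul_apply, ih, smul_zero]
    exact (Module.forall_dual_apply_eq_zero_iff ℝ v).1 hall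

lemma card_supersets {S : Finset (Fin n)} (hS : S.card = r) {m : ℕ} (hrm : r ≤ m) :
    ((Finset.powersetCard m (Finset.univ : Finset (Fin n))).filter (fun J => S ⊆ J)).card
      = (n - r).choose (m - r) := by
  classical
  have key : ((Finset.powersetCard m (Finset.univ : Finset (Fin n))).filter
      (fun J => S ⊆ J)).card = (Finset.powersetCard (m - r) Sᶜ).card := by
    refine Finset.card_bij' (fun J _ => J \ S) (fun J' _ => J' ∪ S) ?_ ?_ ?_ ?_
    · intro J hJ
      rw [Finset.mem_filter, Finset.mem_powersetCard] at hJ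
      obtain ⟨⟨_, hJc⟩, hSJ⟩ := hJ
      rw [Finset.mem_powersetCard]
      constructor
      · intro x hx
        rw [Finset.mem_sdiff] at hx
        exact Finset.mem_compl.2 hx.2
      · rw [Finset.card_sdiff_of_subset hSJ, hJc, hS]
    · intro J' hJ'
      rw [Finset.mem_powersetCard] at hJ'
      obtain ⟨hsub, hc⟩ := hJ'
      have hdisj : Disjoint J' S := by
        rw [Finset.disjoint_left]
        intro x hx
        exact Finset.mem_compl.1 (hsub hx)
      rw [Finset.mem_filter, Finset.mem_powersetCard]
      refine ⟨⟨Finset.subset_univ _, ?_⟩, Finset.subset_union_right⟩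
      rw [Finset.card_union_of_disjoint hdisj, hc, hS, Nat.sub_add_cancel hrm]
    · intro J hJ
      rw [Finset.mem_filter] at hJ
      exact Finset.sdiff_union_of_subset hJ.2
    · intro J' hJ'
      rw [Finset.mem_powersetCard] at hJ'
      have hdisj : Disjoint J' S := by
        rw [Finset.disjoint_left]
        intro x hx
        exact Finset.mem_compl.1 (hJ'.1 hx)
      show (J' ∪ S) \ S = J'
      rw [Finset.union_sdiff_cancel_right hdisj]
  rw [key, Finset.card_powersetCard, Finset.card_compl, Fintype.card_fin, hS]

lemma choose_identity {m : ℕ} (hrm : r ≤ m) (hmn : m ≤ n) :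
    n.choose m * m.choose r = n.choose r * (n - r).choose (m - r) := by
  have hrn : r ≤ n := hrm.trans hmn
  have key : n.choose m * m.choose r * (r.factorial * ((m - r).factorial * (n - m).factorial))
      = n.choose r * (n - r).choose (m - r) *
        (r.factorial * ((m - r).factorial * (n - m).factorial)) := by
    have h1 : n.choose m * m.factorial * (n - m).factorial = n.factorial :=
      Nat.choose_mul_factorial_mul_factorial hmn
    have h2 : m.choose r * r.factorial * (m - r).factorial = m.factorial :=
      Nat.choose_mul_factorial_mul_factorial hrm
    have h3 : n.choose r * r.factorial * (n - r).factorial = n.factorial :=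
      Nat.choose_mul_factorial_mul_factorial hrn
    have h4 : (n - r).choose (m - r) * (m - r).factorial * (n - r - (m - r)).factorial
        = (n - r).factorial := Nat.choose_mul_factorial_mul_factorial (Nat.sub_le_sub_right hmn r)
    rw [Nat.sub_sub_sub_cancel_right hrm] at h4
    calc n.choose m * m.choose r * (r.factorial * ((m - r).factorial * (n - m).factorial))
        = n.choose m * (m.choose r * r.factorial * (m - r).factorial) * (n - m).factorial := by
          ring
      _ = n.choose m * m.factorial * (n - m).factorial := by rw [h2]
      _ = n.factorial := h1
      _ = n.choose r * r.factorial * (n - r).factorial := h3.symm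
      _ = n.choose r * r.factorial *
            ((n - r).choose (m - r) * (m - r).factorial * (n - m).factorial) := by rw [h4]
      _ = n.choose r * (n - r).choose (m - r) *
            (r.factorial * ((m - r).factorial * (n - m).factorial)) := by ring
  have hpos : 0 < r.factorial * ((m - r).factorial * (n - m).factorial) :=
    Nat.mul_pos r.factorial_pos (Nat.mul_pos (Nat.factorial_pos _) (Nat.factorial_pos _))
  exact Nat.eq_of_mul_eq_mul_right hpos key

lemma card_filter_lt {m : ℕ} (hmn : m ≤ n) :
    (Finset.univ.filter (fun j : Fin n => (j : ℕ) < m)).card = m := by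
  classical
  have : (Finset.univ.filter (fun j : Fin n => (j : ℕ) < m)).card
      = (Finset.univ : Finset (Fin m)).card := by
    refine Finset.card_bij' (fun j hj => ⟨(j : ℕ), (Finset.mem_filter.1 hj).2⟩)
      (fun j' _ => Fin.castLE hmn j') ?_ ?_ ?_ ?_
    · intro j hj; exact Finset.mem_univ _
    · intro j' _
      rw [Finset.mem_filter]
      exact ⟨Finset.mem_univ _, by simp [Fin.isLt]⟩
    · intro j hj; rfl
    · intro j' hj'; rfl
  rw [this, Finset.card_univ, Fintype.card_fin]

/-- permutation matrix conjugating the two diagonal projections -/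
lemma exists_perm_matrix {Jstar J0 : Finset (Fin n)} (hcard : J0.card = Jstar.card) :
    ∃ P : Matrix (Fin n) (Fin n) ℝ, P.det ≠ 0 ∧
      P * Matrix.diagonal (fun j => if j ∈ J0 then (1:ℝ) else 0)
        = Matrix.diagonal (fun j => if j ∈ Jstar then (1:ℝ) else 0) * P := by
  classical
  have hcompl : (Finset.univ.filter (fun x : Fin n => ¬ x ∈ Jstar)).card
      = (Finset.univ.filter (fun x : Fin n => ¬ x ∈ J0)).card := by
    have h1 : ∀ J : Finset (Fin n), (Finset.univ.filter (fun x : Fin n => ¬ x ∈ J)).card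
        = n - J.card := by
      intro J
      have : Finset.univ.filter (fun x : Fin n => ¬ x ∈ J) = Jᶜ := by
        ext x; simp [Finset.mem_compl]
      rw [this, Finset.card_compl, Fintype.card_fin]
    rw [h1, h1, hcard]
  have hmemequiv : ∀ (J : Finset (Fin n)), {x // x ∈ Finset.univ.filter (fun x : Fin n => ¬ x ∈ J)}
      ≃ {x : Fin n // ¬ x ∈ J} := fun J => Equiv.subtypeEquivRight (by intro x; simp)
  have e : {x : Fin n // x ∈ Jstar} ≃ {x : Fin n // x ∈ J0} :=
    Finset.equivOfCardEq hcard.symm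
  have f : {x : Fin n // ¬ x ∈ Jstar} ≃ {x : Fin n // ¬ x ∈ J0} :=
    ((hmemequiv Jstar).symm.trans (Finset.equivOfCardEq hcompl)).trans (hmemequiv J0)
  set σ : Equiv.Perm (Fin n) := Equiv.subtypeCongr e f with hσ
  have hprop : ∀ i : Fin n, σ i ∈ J0 ↔ i ∈ Jstar := by
    intro i
    by_cases h : i ∈ Jstar
    · have : σ i = (e ⟨i, h⟩ : Fin n) := by
        simp [hσ, Equiv.subtypeCongr, h]
      rw [this]
      simp [(e ⟨i, h⟩).2, h]
    · have : σ i = (f ⟨i, h⟩ : Fin n) := by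
        simp [hσ, Equiv.subtypeCongr, h]
      rw [this]
      simp [(f ⟨i, h⟩).2, h]
  refine ⟨σ.permMatrix ℝ, ?_, ?_⟩
  · rw [Matrix.det_permutation]
    exact Int.isUnit_iff.1 (Equiv.Perm.sign σ).isUnit |>.elim
      (fun h => by rw [h]; norm_num) (fun h => by rw [h]; norm_num)
  · have hP : ∀ a b : Fin n, σ.permMatrix ℝ a b = if σ a = b then (1:ℝ) else 0 := by
      intro a b
      rw [Equiv.Perm.permMatrix, PEquiv.toMatrix_apply, Equiv.toPEquiv_apply]
      simp [Option.mem_def, eq_comm]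
    ext i j
    rw [Matrix.mul_diagonal, Matrix.diagonal_mul, hP]
    by_cases h : σ i = j
    · subst h
      rw [if_pos rfl, one_mul, mul_one]
      by_cases hmem : i ∈ Jstar
      · rw [if_pos ((hprop i).2 hmem), if_pos hmem]
      · rw [if_neg (fun hc => hmem ((hprop i).1 hc)), if_neg hmem]
    · rw [if_neg h, zero_mul, mul_zero]


end GenProj

open GenProj

set_option maxHeartbeats 2000000

/-- For `0 < d ≤ n`, `0 < r ≤ n - d` and `W ⊆ ⋀^r ℝ^n`, there is a nonzero polynomial
`H` in the `n²` matrix entries such that `H(F) ≠ 0` implies `F` is invertible and the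
projection onto the first `n - d` coordinates of the basis given by `F` preserves the
dimensional fraction of `W`. -/
theorem generic_projection_preserves_fraction (n r d : ℕ)
    (hd : 0 < d) (hdn : d ≤ n) (hr : 0 < r) (hrd : r ≤ n - d)
    (W : Submodule ℝ (ExteriorAlgebra ℝ (Fin n → ℝ)))
    (hWle : W ≤ ⋀[ℝ]^r (Fin n → ℝ)) :
    ∃ H : MvPolynomial (Fin n × Fin n) ℝ, H ≠ 0 ∧
      ∀ F : Matrix (Fin n) (Fin n) ℝ,
        MvPolynomial.eval (fun p => F p.1 p.2) H ≠ 0 →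
          IsUnit F ∧
          (Module.finrank ℝ
              (projImage n F (Finset.univ.filter (fun j : Fin n => (j : ℕ) < n - d)) W) : ℝ) /
                ((n - d).choose r) ≥
            (Module.finrank ℝ W : ℝ) / (n.choose r) := by
  classical
  set m := n - d with hm
  set J0 : Finset (Fin n) := Finset.univ.filter (fun j : Fin n => (j : ℕ) < n - d) with hJ0
  have hmn : m ≤ n := Nat.sub_le n d
  have hJ0card : J0.card = m := card_filter_lt hmn
  have hrn : r ≤ n := hrd.trans hmn
  have hrm : r ≤ m := hrd
  -- finite dimensionality
  have hspan := exteriorPower_le_span (n := n) (r := r)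
  haveI hfdspan : FiniteDimensional ℝ (Submodule.span ℝ (Set.range (eS (n := n) (r := r)))) :=
    FiniteDimensional.span_of_finite ℝ (Set.finite_range _)
  haveI hfd1 : FiniteDimensional ℝ (⋀[ℝ]^r (Fin n → ℝ)) :=
    Submodule.finiteDimensional_of_le hspan
  haveI hfdW : FiniteDimensional ℝ W := Submodule.finiteDimensional_of_le hWle
  set k := Module.finrank ℝ W with hk
  -- coordinates are injective on the r-th exterior power
  have hinj : ∀ x ∈ ⋀[ℝ]^r (Fin n → ℝ), (∀ S : Sets n r, cS S x = 0) → x = 0 := by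
    intro x hx hc
    obtain ⟨a, ha⟩ := (Submodule.mem_span_range_iff_exists_fun ℝ).1 (hspan hx)
    have haS : ∀ S, a S = 0 := by
      intro S
      have hS0 := hc S
      rw [← ha, map_sum] at hS0
      have : ∀ S' : Sets n r, cS S (a S' • eS S') = if S' = S then a S' else 0 := by
        intro S'
        rw [LinearMap.map_smul, cS_eS]
        by_cases h : S' = S <;> simp [h]
      rw [Finset.sum_congr rfl (fun S' _ => this S')] at hS0
      rw [Finset.sum_ite_eq' Finset.univ S a] at hS0
      simpa using hS0
    rw [← ha]
    simp [haS]
  -- the coordinate map on W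
  set cW : W →ₗ[ℝ] (Sets n r → ℝ) :=
    LinearMap.pi (fun S => (cS S).comp W.subtype) with hcW
  have hcWinj : Function.Injective cW := by
    rw [← LinearMap.ker_eq_bot, LinearMap.ker_eq_bot']
    intro w hw
    have : ∀ S : Sets n r, cS S (w : ExteriorAlgebra ℝ (Fin n → ℝ)) = 0 := by
      intro S
      exact congrFun hw S
    exact Subtype.ext (hinj _ (hWle w.2) this)
  obtain ⟨T, hTcard, hT⟩ := exists_good_coords cW hcWinj
  rw [← hk] at hTcard
  -- averaging over all m-element subsets
  set P := Finset.powersetCard m (Finset.univ : Finset (Fin n)) with hP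
  have hPcard : P.card = n.choose m := by
    rw [hP, Finset.card_powersetCard, Finset.card_univ, Fintype.card_fin]
  have hsum : ∑ J ∈ P, (T.filter (fun S => S.1 ⊆ J)).card = k * (n - r).choose (m - r) := by
    have h1 : ∀ J, (T.filter (fun S => S.1 ⊆ J)).card
        = ∑ S ∈ T, if S.1 ⊆ J then 1 else 0 := fun J => Finset.card_filter _ _
    rw [Finset.sum_congr rfl (fun J _ => h1 J), Finset.sum_comm]
    have h2 : ∀ S : Sets n r, S ∈ T → (∑ J ∈ P, if S.1 ⊆ J then 1 else 0)
        = (n - r).choose (m - r) := by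
      intro S _
      rw [← Finset.card_filter]
      exact card_supersets S.2 hrm
    rw [Finset.sum_congr rfl h2, Finset.sum_const, hTcard, smul_eq_mul]
  have hPne : P.Nonempty := ⟨J0, by rw [hP, Finset.mem_powersetCard]; exact ⟨Finset.subset_univ _, hJ0card⟩⟩
  obtain ⟨Jstar, hJstarP, hJstarmax⟩ :=
    Finset.exists_max_image P (fun J => (T.filter (fun S => S.1 ⊆ J)).card) hPne
  have hJstarcard : Jstar.card = m := (Finset.mem_powersetCard.1 hJstarP).2
  set TJ := T.filter (fun S => S.1 ⊆ Jstar) with hTJ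
  set k' := TJ.card with hk'
  have havg : k * (n - r).choose (m - r) ≤ n.choose m * k' := by
    rw [← hsum, ← hPcard]
    calc ∑ J ∈ P, (T.filter (fun S => S.1 ⊆ J)).card
        ≤ ∑ _J ∈ P, k' := Finset.sum_le_sum (fun J hJ => hJstarmax J hJ)
      _ = P.card * k' := by rw [Finset.sum_const, smul_eq_mul]
  have hkey : k * m.choose r ≤ k' * n.choose r := by
    have hchid := choose_identity (n := n) hrm hmn
    have h3 : k * m.choose r * n.choose m ≤ k' * n.choose r * n.choose m := by
      calc k * m.choose r * n.choose m = k * (n.choose m * m.choose r) := by ring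
        _ = k * (n.choose r * (n - r).choose (m - r)) := by rw [hchid]
        _ = n.choose r * (k * (n - r).choose (m - r)) := by ring
        _ ≤ n.choose r * (n.choose m * k') := Nat.mul_le_mul_left _ havg
        _ = k' * n.choose r * n.choose m := by ring
    have hnm : 0 < n.choose m := Nat.choose_pos hmn
    exact Nat.le_of_mul_le_mul_right h3 hnm
  -- the permutation matrix
  obtain ⟨P0, hP0det, hP0comm⟩ :=
    exists_perm_matrix (Jstar := Jstar) (J0 := J0) (hJ0card.trans hJstarcard.symm)
  -- surjectivity of coordinates on T
  set ψ : W →ₗ[ℝ] ({S // S ∈ T} → ℝ) :=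
    LinearMap.pi (fun S => (cS S.1).comp W.subtype) with hψ
  have hψinj : Function.Injective ψ := by
    rw [← LinearMap.ker_eq_bot, LinearMap.ker_eq_bot']
    intro w hw
    refine hT w (fun S hS => ?_)
    exact congrFun hw ⟨S, hS⟩
  have hψsurj : Function.Surjective ψ := by
    have hdim : Module.finrank ℝ W = Module.finrank ℝ ({S // S ∈ T} → ℝ) := by
      rw [Module.finrank_fintype_fun_eq_card, Fintype.card_coe, hTcard]
    exact (LinearMap.injective_iff_surjective_of_finrank_eq_finrank hdim).1 hψinj
  -- pick the vectors u
  have hu : ∀ S : {S // S ∈ TJ}, ∃ u : W, ∀ S' : {S // S ∈ TJ},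
      cS S'.1 (ExteriorAlgebra.map (Matrix.toLin'
        (Matrix.diagonal (fun j => if j ∈ Jstar then (1:ℝ) else 0))) (u : ExteriorAlgebra ℝ (Fin n → ℝ)))
      = if S' = S then 1 else 0 := by
    intro S
    have hSmemT : S.1 ∈ T := (Finset.mem_filter.1 S.2).1
    obtain ⟨u, hu⟩ := hψsurj (fun S' : {S // S ∈ T} => if S'.1 = S.1 then 1 else 0)
    refine ⟨u, fun S' => ?_⟩
    have hS'J : S'.1.1 ⊆ Jstar := (Finset.mem_filter.1 S'.2).2
    have hS'T : S'.1 ∈ T := (Finset.mem_filter.1 S'.2).1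
    rw [cS_map_diag hS'J (hWle u.2)]
    have := congrFun hu ⟨S'.1, hS'T⟩
    simp only [hψ, LinearMap.pi_apply, LinearMap.comp_apply, Submodule.coe_subtype] at this
    rw [this]
    by_cases h : S' = S
    · rw [if_pos h, if_pos (congrArg Subtype.val h)]
    · rw [if_neg h, if_neg (fun hc => h (Subtype.ext hc))]
  choose u huspec using hu
  -- polynomial matrices
  set Xmat : Matrix (Fin n) (Fin n) (MvPolynomial (Fin n × Fin n) ℝ) :=
    Matrix.of (fun i j => MvPolynomial.X (i, j)) with hXmat
  set Dmat : Matrix (Fin n) (Fin n) (MvPolynomial (Fin n × Fin n) ℝ) :=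
    Matrix.diagonal (fun j => if j ∈ J0 then 1 else 0) with hDmat
  set Qmat := Xmat * Dmat * Xmat.adjugate with hQmat
  set Dre : Matrix (Fin n) (Fin n) ℝ :=
    Matrix.diagonal (fun j => if j ∈ J0 then (1:ℝ) else 0) with hDre
  have hXeval : ∀ F : Matrix (Fin n) (Fin n) ℝ, (evalM n F).mapMatrix Xmat = F := by
    intro F
    ext i j
    simp [hXmat, evalM, MvPolynomial.eval_X]
  have hQeval : ∀ F : Matrix (Fin n) (Fin n) ℝ,
      Qmat.map (evalM n F) = F * Dre * F.adjugate := by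
    intro F
    have h1 : Qmat.map (evalM n F) = (evalM n F).mapMatrix Qmat := rfl
    have hD : (evalM n F).mapMatrix Dmat = Dre := by
      rw [RingHom.mapMatrix_apply, hDmat, hDre,
        Matrix.diagonal_map (by simp : (evalM n F) 0 = 0)]
      congr 1
      funext j
      by_cases h : j ∈ J0 <;> simp [h]
    rw [h1, hQmat, _root_.map_mul, _root_.map_mul, RingHom.map_adjugate, hXeval, hD]
  -- coordinate polynomials
  have hq : ∀ S' S : {S // S ∈ TJ}, ∃ q : MvPolynomial (Fin n × Fin n) ℝ, ∀ F,
      evalM n F q = cS S'.1 (ExteriorAlgebra.map (Matrix.toLin' (Qmat.map (evalM n F)))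
        (u S : ExteriorAlgebra ℝ (Fin n → ℝ))) :=
    fun S' S => exists_poly_coord Qmat _ (cS S'.1)
  choose q hqspec using hq
  set Hpoly := Xmat.det * (Matrix.of q).det with hHpoly
  refine ⟨Hpoly, ?_, ?_⟩
  · -- Hpoly is nonzero: evaluate at the permutation matrix P0
    intro hzero
    have heval : evalM n P0 Hpoly = 0 := by rw [hzero]; simp
    rw [hHpoly, _root_.map_mul] at heval
    have hdet1 : evalM n P0 Xmat.det = P0.det := by
      rw [RingHom.map_det, hXeval]
    have hDadj : Qmat.map (evalM n P0) = P0.det • Matrix.diagonal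
        (fun j => if j ∈ Jstar then (1:ℝ) else 0) := by
      rw [hQeval]
      rw [hP0comm, Matrix.mul_assoc, Matrix.mul_adjugate, Matrix.mul_smul, Matrix.mul_one]
    have hdet2 : evalM n P0 (Matrix.of q).det
        = (P0.det ^ r) ^ Fintype.card {S // S ∈ TJ} := by
      rw [RingHom.map_det]
      have hentry : (evalM n P0).mapMatrix (Matrix.of q)
          = (P0.det ^ r) • (1 : Matrix {S // S ∈ TJ} {S // S ∈ TJ} ℝ) := by
        ext S' S
        rw [RingHom.mapMatrix_apply, Matrix.map_apply, Matrix.of_apply, hqspec, hDadj]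
        have hsmul : Matrix.toLin' (P0.det • Matrix.diagonal
            (fun j => if j ∈ Jstar then (1:ℝ) else 0))
            = P0.det • Matrix.toLin' (Matrix.diagonal
              (fun j => if j ∈ Jstar then (1:ℝ) else 0)) := by
          rw [_root_.map_smul]
        rw [hsmul, map_smul_linear _ _ (hWle (u S).2), LinearMap.map_smul, huspec]
        by_cases h : S' = S
        · simp [h, Matrix.one_apply, Matrix.smul_apply]
        · simp [h, Matrix.one_apply, Matrix.smul_apply, fun hc : S' = S => h hc]
      rw [hentry, Matrix.det_smul, Matrix.det_one, mul_one]
    rw [hdet1, hdet2] at heval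
    have : P0.det * (P0.det ^ r) ^ Fintype.card {S // S ∈ TJ} ≠ 0 :=
      mul_ne_zero hP0det (pow_ne_zero _ (pow_ne_zero _ hP0det))
    exact this heval
  · -- main implication
    intro F hF
    have hF' : evalM n F Hpoly ≠ 0 := hF
    rw [hHpoly, _root_.map_mul] at hF'
    have hdetF : F.det ≠ 0 := by
      intro h
      apply hF'
      rw [RingHom.map_det, hXeval, h, zero_mul]
    have hMq : ((evalM n F).mapMatrix (Matrix.of q)).det ≠ 0 := by
      intro h
      apply hF'
      rw [RingHom.map_det, RingHom.map_det, h, mul_zero]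
    refine ⟨(Matrix.isUnit_iff_isUnit_det F).2 (isUnit_iff_ne_zero.2 hdetF), ?_⟩
    -- relate the polynomial matrix to the projection
    have hrel : Qmat.map (evalM n F) = F.det • (F * Dre * F⁻¹) := by
      rw [hQeval, Matrix.inv_def, Ring.inverse_eq_inv']
      rw [Matrix.mul_smul, smul_smul, mul_inv_cancel₀ hdetF, one_smul]
    set y : {S // S ∈ TJ} → ExteriorAlgebra ℝ (Fin n → ℝ) :=
      fun S => ExteriorAlgebra.map (projMap n F J0) (u S : ExteriorAlgebra ℝ (Fin n → ℝ)) with hy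
    have hLFy : ∀ S, ExteriorAlgebra.map (Matrix.toLin' (Qmat.map (evalM n F)))
        (u S : ExteriorAlgebra ℝ (Fin n → ℝ)) = F.det ^ r • y S := by
      intro S
      rw [hrel]
      have hsm : Matrix.toLin' (F.det • (F * Dre * F⁻¹)) = F.det • Matrix.toLin' (F * Dre * F⁻¹) := by
        rw [_root_.map_smul]
      rw [hsm, map_smul_linear _ _ (hWle (u S).2)]
      rfl
    -- linear independence of the images
    have hyind : LinearIndependent ℝ y := by
      rw [Fintype.linearIndependent_iff]
      intro g hg
      have hg' : ∀ S' : {S // S ∈ TJ},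
          ((evalM n F).mapMatrix (Matrix.of q)).mulVec g S' = 0 := by
        intro S'
        have : cS S'.1 (∑ S, g S • (F.det ^ r • y S)) = 0 := by
          have h0 : (∑ S, g S • (F.det ^ r • y S)) = F.det ^ r • (0 : ExteriorAlgebra ℝ (Fin n → ℝ)) := by
            rw [← hg]
            rw [Finset.smul_sum]
            refine Finset.sum_congr rfl fun S _ => ?_
            rw [smul_comm]
          rw [h0, smul_zero, map_zero]
        rw [map_sum] at this
        simp only [Matrix.mulVec, dotProduct, RingHom.mapMatrix_apply, Matrix.map_apply,
          Matrix.of_apply]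
        rw [← this]
        refine Finset.sum_congr rfl fun S _ => ?_
        rw [hqspec, hLFy, LinearMap.map_smul]
        simp [mul_comm]
      have := Matrix.eq_zero_of_mulVec_eq_zero hMq (funext hg')
      intro S
      exact congrFun this S
    -- conclude the rank bound
    have hymem : ∀ S, y S ∈ projImage n F J0 W := by
      intro S
      exact ⟨(u S : ExteriorAlgebra ℝ (Fin n → ℝ)), (u S).2, rfl⟩
    haveI : FiniteDimensional ℝ (projImage n F J0 W) := by
      unfold projImage
      exact Module.Finite.map W _
    have hliftind : LinearIndependent ℝ (fun S => (⟨y S, hymem S⟩ : projImage n F J0 W)) := by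
      apply LinearIndependent.of_comp (projImage n F J0 W).subtype
      convert hyind
      rfl
    have hbound : k' ≤ Module.finrank ℝ (projImage n F J0 W) := by
      have := hliftind.fintype_card_le_finrank
      rwa [Fintype.card_coe] at this
    -- final arithmetic
    have hc1 : (0:ℝ) < (n.choose r : ℝ) := by exact_mod_cast Nat.choose_pos hrn
    have hc2 : (0:ℝ) < ((n - d).choose r : ℝ) := by exact_mod_cast Nat.choose_pos hrm
    rw [ge_iff_le, div_le_div_iff₀ hc1 hc2]
    have hfin : k * m.choose r ≤ (Module.finrank ℝ (projImage n F J0 W)) * n.choose r :=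
      hkey.trans (Nat.mul_le_mul_right _ hbound)
    exact_mod_cast hfin
end

section
/- Let V = ℝ^n, suppose 0 < r ≤ n - d ≤ n with d ≥ 0, let W be a linear subspace of ⋀^r V, and let F be an invertible n×n real matrix. Then dim(W ∧ ⋀^d V) / C(n, r+d) ≥ (1 / C(n, n-d)) · Σ_J [dim π^F_J(W) / C(n-d, r)], where the sum is over all subsets J of {1,…,n} with |J| = n - d. -/
open ExteriorAlgebra Submodule

noncomputable section AuxExt

namespace WedgeAux

abbrev Ext (n : ℕ) := ExteriorAlgebra ℝ (Fin n → ℝ)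

variable {n : ℕ} (f : Module.Basis (Fin n) ℝ (Fin n → ℝ))

def mL (l : List (Fin n)) : Ext n := (l.map fun i => ι ℝ (f i)).prod

@[simp] lemma mL_nil : mL f [] = 1 := rfl

@[simp] lemma mL_cons (i : Fin n) (l : List (Fin n)) :
    mL f (i :: l) = ι ℝ (f i) * mL f l := by simp [mL]

lemma mL_append (l l' : List (Fin n)) : mL f (l ++ l') = mL f l * mL f l' := by
  simp [mL]

lemma ι_anticomm (x y : Fin n → ℝ) : ι ℝ x * ι ℝ y = -(ι ℝ y * ι ℝ x) :=
  eq_neg_of_add_eq_zero_left (ι_add_mul_swap x y)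

lemma ι_mul_mL_of_mem {i : Fin n} : ∀ {l : List (Fin n)}, i ∈ l →
    ι ℝ (f i) * mL f l = 0 := by
  intro l h
  induction l with
  | nil => simp at h
  | cons j t ih =>
    rcases List.mem_cons.mp h with h | h
    · subst h; rw [mL_cons, ← mul_assoc, ι_sq_zero, zero_mul]
    · rw [mL_cons, ← mul_assoc, ι_anticomm, neg_mul, mul_assoc, ih h, mul_zero, neg_zero]

lemma ι_mul_mL_sorted : ∀ {l : List (Fin n)}, l.Pairwise (· < ·) → ∀ {i : Fin n}, i ∉ l →
    ∃ (c : ℝ) (l' : List (Fin n)), l'.Pairwise (· < ·) ∧ l'.toFinset = insert i l.toFinset ∧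
      (c = 1 ∨ c = -1) ∧ ι ℝ (f i) * mL f l = c • mL f l' := by
  intro l
  induction l with
  | nil =>
    intro _ i _
    exact ⟨1, [i], by simp, by simp, Or.inl rfl, by simp⟩
  | cons j t ih =>
    intro hs i hi
    have hjt : ∀ x ∈ t, j < x := (List.pairwise_cons.mp hs).1
    have hts : t.Pairwise (· < ·) := (List.pairwise_cons.mp hs).2
    have hij : i ≠ j := fun h => hi (h ▸ List.mem_cons_self)
    have hit : i ∉ t := fun h => hi (List.mem_cons_of_mem _ h)
    rcases lt_or_gt_of_ne hij with hlt | hgt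
    · refine ⟨1, i :: j :: t, ?_, by simp, Or.inl rfl, by simp⟩
      exact List.pairwise_cons.mpr ⟨fun x hx => by
        rcases List.mem_cons.mp hx with rfl | hx
        · exact hlt
        · exact hlt.trans (hjt x hx), hs⟩
    · obtain ⟨c, l'', hs'', htf'', hc'', heq''⟩ := ih hts hit
      refine ⟨-c, j :: l'', ?_, ?_, ?_, ?_⟩
      · refine List.pairwise_cons.mpr ⟨fun x hx => ?_, hs''⟩
        have : x ∈ l''.toFinset := List.mem_toFinset.mpr hx
        rw [htf''] at this
        rcases Finset.mem_insert.mp this with rfl | hx'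
        · exact hgt
        · exact hjt x (List.mem_toFinset.mp hx')
      · rw [List.toFinset_cons, htf'', List.toFinset_cons, Finset.insert_comm]
      · rcases hc'' with rfl | rfl
        · exact Or.inr rfl
        · exact Or.inl (by norm_num)
      · rw [mL_cons, ← mul_assoc, ι_anticomm, neg_mul, mul_assoc, heq'', mL_cons,
          mul_smul_comm, neg_smul]

def bS (S : Finset (Fin n)) : Ext n := mL f (S.sort (· ≤ ·))

@[simp] lemma bS_empty : bS f ∅ = 1 := by simp [bS]

lemma mL_sorted_eq_bS {l : List (Fin n)} (h : l.Pairwise (· < ·)) :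
    mL f l = bS f l.toFinset := by
  rw [bS]
  congr 1
  exact ((List.toFinset_sort (r := (· ≤ ·)) h.nodup).mpr (h.imp le_of_lt)).symm

lemma ι_mul_bS_of_mem {i : Fin n} {S : Finset (Fin n)} (h : i ∈ S) :
    ι ℝ (f i) * bS f S = 0 :=
  ι_mul_mL_of_mem f ((Finset.mem_sort _).mpr h)

lemma ι_mul_bS_of_not_mem {i : Fin n} {S : Finset (Fin n)} (h : i ∉ S) :
    ∃ c : ℝ, (c = 1 ∨ c = -1) ∧ ι ℝ (f i) * bS f S = c • bS f (insert i S) := by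
  obtain ⟨c, l', hs, htf, hc, heq⟩ := ι_mul_mL_sorted f ((Finset.sortedLT_sort S).pairwise)
    (i := i) (fun hmem => h ((Finset.mem_sort _).mp hmem))
  refine ⟨c, hc, ?_⟩
  rw [bS, heq, mL_sorted_eq_bS f hs, htf, Finset.sort_toFinset]

lemma mL_eq_smul_bS (l : List (Fin n)) : ∃ c : ℝ,
    mL f l = c • bS f l.toFinset ∧ (l.Nodup → c * c = 1) ∧ (¬ l.Nodup → c = 0) := by
  induction l with
  | nil => exact ⟨1, by simp, fun _ => by norm_num, fun h => absurd List.nodup_nil h⟩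
  | cons i t ih =>
    obtain ⟨c, hc1, hc2, hc3⟩ := ih
    by_cases hnd : t.Nodup
    · by_cases him : i ∈ t
      · refine ⟨0, ?_, fun h => absurd ((List.nodup_cons.mp h).1) (by simpa using him),
          fun _ => rfl⟩
        rw [mL_cons, hc1, mul_smul_comm, ι_mul_bS_of_mem f (List.mem_toFinset.mpr him),
          smul_zero, zero_smul]
      · obtain ⟨c₂, hc₂, heq₂⟩ := ι_mul_bS_of_not_mem f (S := t.toFinset)
          (fun h => him (List.mem_toFinset.mp h))
        refine ⟨c * c₂, ?_, ?_, ?_⟩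
        · rw [mL_cons, hc1, mul_smul_comm, heq₂, smul_smul, List.toFinset_cons, mul_comm c c₂]
        · intro h
          have h2 := hc2 hnd
          have h3 : c₂ * c₂ = 1 := by rcases hc₂ with rfl | rfl <;> norm_num
          calc c * c₂ * (c * c₂) = (c * c) * (c₂ * c₂) := by ring
            _ = 1 := by rw [h2, h3, one_mul]
        · intro h
          exact absurd (List.nodup_cons.mpr ⟨him, hnd⟩) h
    · refine ⟨0, ?_, fun h => absurd (List.nodup_cons.mp h).2 hnd, fun _ => rfl⟩
      rw [mL_cons, hc1, hc3 hnd, zero_smul, mul_zero, zero_smul]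

lemma bS_mul_bS_of_disjoint {S K : Finset (Fin n)} (h : Disjoint S K) :
    ∃ c : ℝ, c * c = 1 ∧ bS f S * bS f K = c • bS f (S ∪ K) := by
  obtain ⟨c, h1, h2, _⟩ := mL_eq_smul_bS f (S.sort (· ≤ ·) ++ K.sort (· ≤ ·))
  have hnd : (S.sort (· ≤ ·) ++ K.sort (· ≤ ·)).Nodup := by
    rw [List.nodup_append]
    refine ⟨Finset.sort_nodup _ _, Finset.sort_nodup _ _, fun a ha b hb hab => ?_⟩
    exact (Finset.disjoint_left.mp h ((Finset.mem_sort _).mp ha)) (hab ▸ (Finset.mem_sort _).mp hb)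
  refine ⟨c, h2 hnd, ?_⟩
  rw [bS, bS, ← mL_append, h1, List.toFinset_append, Finset.sort_toFinset, Finset.sort_toFinset]

lemma bS_mul_bS_of_not_disjoint {S K : Finset (Fin n)} (h : ¬ Disjoint S K) :
    bS f S * bS f K = 0 := by
  obtain ⟨c, h1, _, h3⟩ := mL_eq_smul_bS f (S.sort (· ≤ ·) ++ K.sort (· ≤ ·))
  have hnd : ¬ (S.sort (· ≤ ·) ++ K.sort (· ≤ ·)).Nodup := by
    rw [List.nodup_append]
    rintro ⟨-, -, hd⟩
    obtain ⟨a, haS, haK⟩ := Finset.not_disjoint_iff.mp h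
    exact hd a ((Finset.mem_sort _).mpr haS) a ((Finset.mem_sort _).mpr haK) rfl
  rw [bS, bS, ← mL_append, h1, h3 hnd, zero_smul]

lemma mL_mem_pow (l : List (Fin n)) :
    mL f l ∈ (LinearMap.range (ι ℝ : (Fin n → ℝ) →ₗ[ℝ] Ext n)) ^ l.length := by
  induction l with
  | nil => rw [List.length_nil, pow_zero]; exact Submodule.mem_one.mpr ⟨1, map_one _⟩
  | cons i t ih =>
    rw [List.length_cons, pow_succ', mL_cons]
    exact mul_mem_mul (LinearMap.mem_range_self _ _) ih

lemma bS_mem_pow (S : Finset (Fin n)) :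
    bS f S ∈ (LinearMap.range (ι ℝ : (Fin n → ℝ) →ₗ[ℝ] Ext n)) ^ S.card := by
  have := mL_mem_pow f (S.sort (· ≤ ·))
  rwa [Finset.length_sort] at this

-- CHUNK 2: fermionic representation, basis of the exterior algebra

variable (n) in
abbrev MM (n : ℕ) := Finset (Fin n) → ℝ

def sgn (i : Fin n) (T : Finset (Fin n)) : ℝ := (-1 : ℝ) ^ ((T.filter (· < i)).card)

def aOp (i : Fin n) : MM n →ₗ[ℝ] MM n :=
  LinearMap.pi fun T =>
    if i ∈ T then sgn i T • LinearMap.proj (T.erase i) else 0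

lemma aOp_apply (i : Fin n) (x : MM n) (T : Finset (Fin n)) :
    aOp i x T = if i ∈ T then sgn i T * x (T.erase i) else 0 := by
  unfold aOp
  rw [LinearMap.pi_apply]
  split
  · simp [LinearMap.proj_apply, smul_eq_mul]
  · rfl

lemma sgn_erase_of_lt {i j : Fin n} (hij : i < j) (T : Finset (Fin n)) :
    sgn i (T.erase j) = sgn i T := by
  unfold sgn
  congr 1
  rw [Finset.filter_erase, Finset.erase_eq_of_notMem]
  simp only [Finset.mem_filter]
  rintro ⟨-, hj⟩
  exact absurd hij (not_lt.mpr hj.le)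

lemma sgn_erase_of_gt {i j : Fin n} (hij : i < j) {T : Finset (Fin n)} (hi : i ∈ T) :
    sgn j (T.erase i) = -sgn j T := by
  unfold sgn
  rw [Finset.filter_erase]
  have hmem : i ∈ T.filter (· < j) := Finset.mem_filter.mpr ⟨hi, hij⟩
  rw [Finset.card_erase_of_mem hmem]
  have hpos : 1 ≤ (T.filter (· < j)).card := Finset.card_pos.mpr ⟨i, hmem⟩
  obtain ⟨m, hm⟩ : ∃ m, (T.filter (· < j)).card = m + 1 :=
    ⟨(T.filter (· < j)).card - 1, by omega⟩
  rw [hm, Nat.add_sub_cancel, pow_succ]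
  ring

lemma aOp_comp_self (i : Fin n) : aOp (n := n) i ∘ₗ aOp i = 0 := by
  refine LinearMap.ext fun x => funext fun T => ?_
  simp only [LinearMap.comp_apply, aOp_apply]
  split
  · rw [if_neg (Finset.notMem_erase i T), mul_zero]
    rfl
  · rfl

lemma aOp_anticomm {i j : Fin n} (hij : i ≠ j) :
    aOp (n := n) i ∘ₗ aOp j + aOp j ∘ₗ aOp i = 0 := by
  have key : ∀ i j : Fin n, i < j → ∀ (x : MM n) (T : Finset (Fin n)),
      (aOp i ∘ₗ aOp j) x T + (aOp j ∘ₗ aOp i) x T = 0 := by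
    intro i j hlt x T
    simp only [LinearMap.comp_apply, aOp_apply]
    by_cases hi : i ∈ T <;> by_cases hj : j ∈ T
    · rw [if_pos hi, if_pos hj, if_pos (Finset.mem_erase.mpr ⟨hlt.ne', hj⟩),
        if_pos (Finset.mem_erase.mpr ⟨hlt.ne, hi⟩), sgn_erase_of_lt hlt,
        sgn_erase_of_gt hlt hi, Finset.erase_right_comm]
      ring
    · rw [if_pos hi, if_neg hj, if_neg (fun h => hj (Finset.mem_of_mem_erase h))]
      simp
    · rw [if_neg hi, if_pos hj, if_neg (fun h => hi (Finset.mem_of_mem_erase h))]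
      simp
    · rw [if_neg hi, if_neg hj]
      simp
  refine LinearMap.ext fun x => funext fun T => ?_
  simp only [LinearMap.add_apply, LinearMap.zero_apply]
  have hz : ((0 : MM n) T) = 0 := rfl
  rcases hij.lt_or_gt with h | h
  · have := key i j h x T
    simpa using this
  · have := key j i h x T
    rw [show ((aOp i ∘ₗ aOp j) x + (aOp j ∘ₗ aOp i) x) T
        = (aOp i ∘ₗ aOp j) x T + (aOp j ∘ₗ aOp i) x T from rfl, add_comm]
    exact this

def phi : (Fin n → ℝ) →ₗ[ℝ] Module.End ℝ (MM n) :=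
  ∑ i : Fin n, LinearMap.smulRight (f.coord i) (aOp i)

lemma phi_apply (v : Fin n → ℝ) :
    phi f v = ∑ i : Fin n, f.repr v i • aOp i := by
  unfold phi
  rw [LinearMap.sum_apply]
  simp [Module.Basis.coord_apply]

lemma phi_basis (j : Fin n) : phi f (f j) = aOp j := by
  rw [phi_apply]
  rw [Finset.sum_eq_single j]
  · simp
  · intro i _ hne
    rw [Module.Basis.repr_self_apply, if_neg (fun h => hne h.symm), zero_smul]
  · intro h
    exact absurd (Finset.mem_univ j) h


lemma phi_sq_zero (v : Fin n → ℝ) : phi f v * phi f v = 0 := by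
  set c : Fin n → ℝ := fun i => f.repr v i with hc
  have hexp : phi f v * phi f v
      = ∑ i : Fin n, ∑ j : Fin n, (c i * c j) • (aOp i ∘ₗ aOp j) := by
    rw [phi_apply, Finset.sum_mul_sum]
    refine Finset.sum_congr rfl fun i _ => Finset.sum_congr rfl fun j _ => ?_
    rw [← Module.End.mul_eq_comp]
    exact smul_mul_smul_comm (c i) (aOp i) (c j) (aOp j)
  have hswap : phi f v * phi f v
      = ∑ i : Fin n, ∑ j : Fin n, (c i * c j) • (aOp j ∘ₗ aOp i) := by
    rw [hexp, Finset.sum_comm]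
    exact Finset.sum_congr rfl fun i _ => Finset.sum_congr rfl fun j _ => by rw [mul_comm]
  have hdouble : phi f v * phi f v + phi f v * phi f v = 0 := by
    nth_rewrite 2 [hswap]
    rw [hexp, ← Finset.sum_add_distrib]
    refine Finset.sum_eq_zero fun i _ => ?_
    rw [← Finset.sum_add_distrib]
    refine Finset.sum_eq_zero fun j _ => ?_
    rw [← smul_add]
    by_cases h : i = j
    · subst h
      rw [aOp_comp_self, add_zero, smul_zero]
    · rw [aOp_anticomm h, smul_zero]
  have h2 : (2 : ℝ) • (phi f v * phi f v) = 0 := by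
    rw [two_smul]; exact hdouble
  have := smul_eq_zero.mp h2
  rcases this with h | h
  · norm_num at h
  · exact h

def Phi : Ext n →ₐ[ℝ] Module.End ℝ (MM n) :=
  ExteriorAlgebra.lift ℝ ⟨phi f, phi_sq_zero f⟩

@[simp] lemma Phi_ι (v : Fin n → ℝ) : Phi f (ι ℝ v) = phi f v := by
  show ExteriorAlgebra.lift ℝ ⟨phi f, phi_sq_zero f⟩ (ι ℝ v) = phi f v
  exact ExteriorAlgebra.lift_ι_apply ℝ (phi f) (phi_sq_zero f) v

def delta0 : MM n := Pi.single ∅ 1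

def Psi : Ext n →ₗ[ℝ] MM n where
  toFun x := Phi f x (delta0)
  map_add' x y := by
    show Phi f (x + y) delta0 = Phi f x delta0 + Phi f y delta0
    rw [map_add]; rfl
  map_smul' c x := by
    show Phi f (c • x) delta0 = c • Phi f x delta0
    rw [map_smul]; rfl

lemma Psi_apply (x : Ext n) : Psi f x = Phi f x delta0 := rfl

lemma aOp_single {i : Fin n} {T : Finset (Fin n)} (hiT : i ∉ T) (hlt : ∀ x ∈ T, i < x) :
    aOp i (Pi.single T 1) = Pi.single (insert i T) 1 := by
  funext U
  rw [aOp_apply]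
  by_cases hiU : i ∈ U
  · rw [if_pos hiU]
    by_cases hU : U.erase i = T
    · have hUeq : U = insert i T := by
        rw [← hU, Finset.insert_erase hiU]
      have hsgn : sgn i U = 1 := by
        unfold sgn
        have : U.filter (· < i) = ∅ := by
          rw [Finset.filter_eq_empty_iff]
          intro x hx
          rw [hUeq] at hx
          rcases Finset.mem_insert.mp hx with rfl | hx
          · exact lt_irrefl x
          · exact not_lt.mpr (hlt x hx).le
        rw [this]
        simp
      rw [hsgn, hU, Pi.single_eq_same, hUeq, Pi.single_eq_same, one_mul]
    · have hUne : U ≠ insert i T := by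
        intro h
        apply hU
        rw [h, Finset.erase_insert hiT]
      rw [Pi.single_eq_of_ne hU, Pi.single_eq_of_ne hUne, mul_zero]
  · rw [if_neg hiU]
    have hUne : U ≠ insert i T := fun h => hiU (h ▸ Finset.mem_insert_self i T)
    rw [Pi.single_eq_of_ne hUne]

lemma Psi_mL {l : List (Fin n)} (h : l.Pairwise (· < ·)) :
    Psi f (mL f l) = Pi.single l.toFinset 1 := by
  induction l with
  | nil =>
    rw [mL_nil, Psi_apply, map_one]
    rfl
  | cons i t ih =>
    have hts : t.Pairwise (· < ·) := (List.pairwise_cons.mp h).2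
    have hlt : ∀ x ∈ t, i < x := (List.pairwise_cons.mp h).1
    rw [mL_cons, Psi_apply, map_mul, Module.End.mul_apply, Phi_ι, phi_basis,
      ← Psi_apply, ih hts, List.toFinset_cons]
    exact aOp_single (fun hmem => lt_irrefl i (hlt i (List.mem_toFinset.mp hmem)))
      (fun x hx => hlt x (List.mem_toFinset.mp hx))

lemma Psi_bS (S : Finset (Fin n)) : Psi f (bS f S) = Pi.single S 1 := by
  rw [bS, Psi_mL f ((Finset.sortedLT_sort S).pairwise), Finset.sort_toFinset]

lemma bS_linearIndependent : LinearIndependent ℝ (bS f) := by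
  apply LinearIndependent.of_comp (Psi f)
  have : (Psi f ∘ bS f) = fun S : Finset (Fin n) => (Pi.single S 1 : MM n) :=
    funext fun S => Psi_bS f S
  rw [this]
  have hb : (fun S : Finset (Fin n) => (Pi.single S 1 : MM n))
      = ⇑(Pi.basisFun ℝ (Finset (Fin n))) := by
    funext S
    rw [Pi.basisFun_apply]
  rw [hb]
  exact (Pi.basisFun ℝ (Finset (Fin n))).linearIndependent

lemma bS_span : ⊤ ≤ Submodule.span ℝ (Set.range (bS f)) := by
  intro x _
  refine CliffordAlgebra.induction (fun r => ?_) (fun v => ?_) (fun a b ha hb => ?_)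
    (fun a b ha hb => ?_) x
  · have h1 : (1 : Ext n) ∈ Submodule.span ℝ (Set.range (bS f)) := by
      refine Submodule.subset_span ⟨∅, ?_⟩
      rw [bS_empty]
    have : algebraMap ℝ (Ext n) r = r • (1 : Ext n) := Algebra.algebraMap_eq_smul_one r
    rw [this]
    exact Submodule.smul_mem _ _ h1
  · have hsingle : ∀ i : Fin n, ι ℝ (f i) ∈ Submodule.span ℝ (Set.range (bS f)) := by
      intro i
      refine Submodule.subset_span ⟨{i}, ?_⟩
      rw [bS, Finset.sort_singleton]
      simp [mL]
    have hv : ι ℝ v = ∑ i : Fin n, f.repr v i • ι ℝ (f i) := by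
      conv_lhs => rw [← f.sum_repr v]
      rw [map_sum]
      simp
    rw [hv]
    exact Submodule.sum_mem _ fun i _ => Submodule.smul_mem _ _ (hsingle i)
  · -- products
    have hmul : Submodule.span ℝ (Set.range (bS f)) * Submodule.span ℝ (Set.range (bS f))
        ≤ Submodule.span ℝ (Set.range (bS f)) := by
      rw [Submodule.span_mul_span]
      refine Submodule.span_le.mpr ?_
      rintro z ⟨z1, hz1, z2, hz2, rfl⟩
      obtain ⟨S, rfl⟩ := hz1
      obtain ⟨K, rfl⟩ := hz2
      rw [SetLike.mem_coe]
      show bS f S * bS f K ∈ Submodule.span ℝ (Set.range (bS f))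
      by_cases hd : Disjoint S K
      · obtain ⟨c, -, hc⟩ := bS_mul_bS_of_disjoint f hd
        rw [hc]
        exact Submodule.smul_mem _ _ (Submodule.subset_span ⟨S ∪ K, rfl⟩)
      · rw [bS_mul_bS_of_not_disjoint f hd]
        exact Submodule.zero_mem _
    exact hmul (Submodule.mul_mem_mul ha hb)
  · exact Submodule.add_mem _ ha hb

def BB : Module.Basis (Finset (Fin n)) ℝ (Ext n) := Module.Basis.mk (bS_linearIndependent f) (bS_span f)

@[simp] lemma BB_apply (S : Finset (Fin n)) : BB f S = bS f S := Module.Basis.mk_apply _ _ _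

lemma finiteDimensional_Ext (n : ℕ) : FiniteDimensional ℝ (Ext n) :=
  Module.Finite.of_basis (BB (Pi.basisFun ℝ (Fin n)))

-- CHUNK 3: pow span, pivot lemma, counting lemma

lemma mul_ι_rev (l : List (Fin n)) (u : Fin n → ℝ) :
    mL f l * ι ℝ u = ((-1 : ℝ)) ^ l.length • (ι ℝ u * mL f l) := by
  induction l with
  | nil => simp
  | cons i t ih =>
    rw [mL_cons, List.length_cons, mul_assoc, ih, mul_smul_comm, ← mul_assoc,
      ι_anticomm (f i) u, neg_mul, mul_assoc, smul_neg, ← neg_smul, pow_succ]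
    congr 1
    ring

lemma pow_le_span (k : ℕ) :
    (LinearMap.range (ι ℝ : (Fin n → ℝ) →ₗ[ℝ] Ext n)) ^ k
      ≤ Submodule.span ℝ (bS f '' {S : Finset (Fin n) | S.card = k}) := by
  induction k with
  | zero =>
    rw [pow_zero, Submodule.one_eq_span]
    refine Submodule.span_le.mpr ?_
    rintro x hx
    rw [Set.mem_singleton_iff.mp hx]
    exact Submodule.subset_span ⟨∅, by simp, bS_empty f⟩
  | succ k ih =>
    rw [pow_succ]
    refine Submodule.mul_le.mpr fun x hx y hy => ?_
    obtain ⟨u, rfl⟩ := hy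
    have hx' := ih hx
    refine Submodule.span_induction (p := fun z _ =>
      z * ι ℝ u ∈ Submodule.span ℝ (bS f '' {S : Finset (Fin n) | S.card = k + 1}))
      ?_ ?_ ?_ ?_ hx'
    · rintro z ⟨S, hS, rfl⟩
      rw [Set.mem_setOf_eq] at hS
      rw [bS, mul_ι_rev]
      refine Submodule.smul_mem _ _ ?_
      rw [← bS]
      have hrepr : ι ℝ u * bS f S = ∑ i : Fin n, f.repr u i • (ι ℝ (f i) * bS f S) := by
        conv_lhs => rw [← f.sum_repr u]
        rw [map_sum, Finset.sum_mul]
        refine Finset.sum_congr rfl fun i _ => ?_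
        rw [map_smul, smul_mul_assoc]
      rw [hrepr]
      refine Submodule.sum_mem _ fun i _ => Submodule.smul_mem _ _ ?_
      by_cases hmem : i ∈ S
      · rw [ι_mul_bS_of_mem f hmem]
        exact Submodule.zero_mem _
      · obtain ⟨ci, -, hci⟩ := ι_mul_bS_of_not_mem f hmem
        rw [hci]
        refine Submodule.smul_mem _ _ (Submodule.subset_span ⟨insert i S, ?_, rfl⟩)
        rw [Set.mem_setOf_eq, Finset.card_insert_of_notMem hmem, hS]
    · show (0 : Ext n) * ι ℝ u ∈ _
      rw [zero_mul]; exact Submodule.zero_mem _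
    · intro a b _ _ ha hb
      show (a + b) * ι ℝ u ∈ _
      rw [add_mul]; exact Submodule.add_mem _ ha hb
    · intro a z _ hz
      show (a • z) * ι ℝ u ∈ _
      rw [smul_mul_assoc]; exact Submodule.smul_mem _ _ hz

lemma pivot_lemma : ∀ (k : ℕ) (U : Submodule ℝ (Ext n)) (I : Set (Finset (Fin n))),
    Module.finrank ℝ U = k → U ≤ Submodule.span ℝ (bS f '' I) →
    ∃ s : Finset (Finset (Fin n)), ↑s ⊆ I ∧ s.card ≤ k ∧
      Disjoint U (Submodule.span ℝ (bS f '' ((↑s : Set (Finset (Fin n)))ᶜ))) := by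
  haveI := finiteDimensional_Ext n
  intro k
  induction k with
  | zero =>
    intro U I hrk _
    refine ⟨∅, by simp, le_rfl, ?_⟩
    have : U = ⊥ := Submodule.finrank_eq_zero.mp hrk
    rw [this]
    exact disjoint_bot_left
  | succ k ih =>
    intro U I hrk hle
    have hUne : U ≠ ⊥ := by
      intro h
      rw [h, finrank_bot] at hrk
      exact Nat.succ_ne_zero k hrk.symm
    obtain ⟨u, huU, hune⟩ := Submodule.exists_mem_ne_zero_of_ne_bot hUne
    obtain ⟨i0, hi0⟩ : ∃ i, (BB f).repr u i ≠ 0 := by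
      by_contra hcon
      push_neg at hcon
      apply hune
      have : (BB f).repr u = 0 := Finsupp.ext fun i => hcon i
      exact ((BB f).repr.map_eq_zero_iff).mp this
    have hbimg : ∀ (P : Set (Finset (Fin n))), bS f '' P = BB f '' P := by
      intro P
      refine Set.image_congr fun S _ => (BB_apply f S).symm
    have hi0I : i0 ∈ I := by
      have := hle huU
      rw [hbimg, Module.Basis.mem_span_image] at this
      exact this (Finsupp.mem_support_iff.mpr hi0)
    set ψ : U →ₗ[ℝ] ℝ := ((BB f).coord i0) ∘ₗ U.subtype with hψ
    have hψne : ψ ≠ 0 := by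
      intro h
      apply hi0
      have := congrArg (fun g => g ⟨u, huU⟩) h
      simpa [hψ, Module.Basis.coord_apply] using this
    have hrange1 : Module.finrank ℝ (LinearMap.range ψ) = 1 := by
      have hle1 : Module.finrank ℝ (LinearMap.range ψ) ≤ 1 := by
        have := Submodule.finrank_le (LinearMap.range ψ)
        simpa using this
      have hne : LinearMap.range ψ ≠ ⊥ := fun h => hψne (LinearMap.range_eq_bot.mp h)
      have h0 : Module.finrank ℝ (LinearMap.range ψ) ≠ 0 :=
        fun h => hne (Submodule.finrank_eq_zero.mp h)
      omega
    have hker : Module.finrank ℝ (LinearMap.ker ψ) = k := by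
      have := LinearMap.finrank_range_add_finrank_ker ψ
      rw [hrange1, hrk] at this
      omega
    set U' : Submodule ℝ (Ext n) := Submodule.map U.subtype (LinearMap.ker ψ) with hU'
    have hU'rk : Module.finrank ℝ U' = k := by
      rw [hU', Submodule.finrank_map_subtype_eq]
      exact hker
    have hU'le : U' ≤ U := Submodule.map_subtype_le _ _
    obtain ⟨s', hs'I, hs'card, hs'disj⟩ := ih U' I hU'rk (hU'le.trans hle)
    refine ⟨insert i0 s', ?_, ?_, ?_⟩
    · rw [Finset.coe_insert]
      exact Set.insert_subset hi0I hs'I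
    · exact (Finset.card_insert_le _ _).trans (Nat.succ_le_succ hs'card)
    · rw [Submodule.disjoint_def]
      intro x hxU hxspan
      rw [hbimg, Module.Basis.mem_span_image] at hxspan
      have hxi0 : (BB f).repr x i0 = 0 := by
        by_contra h
        have hmem := hxspan (Finsupp.mem_support_iff.mpr h)
        rw [Set.mem_compl_iff] at hmem
        exact hmem (by rw [Finset.coe_insert]; exact Set.mem_insert _ _)
      have hxU' : x ∈ U' := by
        refine ⟨⟨x, hxU⟩, ?_, rfl⟩
        show ψ ⟨x, hxU⟩ = 0
        simpa [hψ, Module.Basis.coord_apply] using hxi0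
      have hxspan' : x ∈ Submodule.span ℝ (bS f '' ((↑s' : Set (Finset (Fin n)))ᶜ)) := by
        rw [hbimg, Module.Basis.mem_span_image]
        refine hxspan.trans ?_
        refine Set.compl_subset_compl.mpr ?_
        rw [Finset.coe_insert]
        exact Set.subset_insert _ _
      exact Submodule.disjoint_def.mp hs'disj x hxU' hxspan'

lemma count_lemma (U : Submodule ℝ (Ext n)) (s : Finset (Finset (Fin n)))
    (hdisj : Disjoint U (Submodule.span ℝ (bS f '' ((↑s : Set (Finset (Fin n)))ᶜ))))
    (K : Finset (Fin n)) :
    Module.finrank ℝ ↥(U ⊓ Submodule.span ℝ (bS f '' {T : Finset (Fin n) | K ⊆ T}))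
      ≤ (s.filter (fun T => K ⊆ T)).card := by
  haveI := finiteDimensional_Ext n
  classical
  set X := U ⊓ Submodule.span ℝ (bS f '' {T : Finset (Fin n) | K ⊆ T}) with hX
  set p : Ext n →ₗ[ℝ] Ext n := (BB f).constr ℝ (fun T => if T ∈ s then bS f T else 0) with hp
  set q : Ext n →ₗ[ℝ] Ext n := (BB f).constr ℝ (fun T => if T ∈ s then 0 else bS f T) with hq
  have hpq : ∀ x : Ext n, p x + q x = x := by
    have hid : p + q = LinearMap.id := by
      refine (BB f).ext fun T => ?_
      rw [LinearMap.add_apply, hp, hq, Module.Basis.constr_basis, Module.Basis.constr_basis,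
        LinearMap.id_apply, BB_apply]
      split <;> simp
    intro x
    have := congrArg (fun g : Ext n →ₗ[ℝ] Ext n => g x) hid
    simpa using this
  have hqmem : ∀ x : Ext n, q x ∈ Submodule.span ℝ (bS f '' ((↑s : Set (Finset (Fin n)))ᶜ)) := by
    intro x
    have hx : x ∈ Submodule.span ℝ (Set.range (BB f)) := Module.Basis.mem_span _ x
    refine Submodule.span_induction (p := fun z _ =>
      q z ∈ Submodule.span ℝ (bS f '' ((↑s : Set (Finset (Fin n)))ᶜ))) ?_ ?_ ?_ ?_ hx
    · rintro z ⟨T, rfl⟩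
      rw [BB_apply, ← BB_apply, hq, Module.Basis.constr_basis]
      by_cases hTs : T ∈ s
      · rw [if_pos hTs]; exact Submodule.zero_mem _
      · rw [if_neg hTs]
        exact Submodule.subset_span ⟨T, by simpa using hTs, rfl⟩
    · show q 0 ∈ _
      rw [map_zero]; exact Submodule.zero_mem _
    · intro a b _ _ ha hb
      show q (a + b) ∈ _
      rw [map_add]; exact Submodule.add_mem _ ha hb
    · intro c a _ ha
      show q (c • a) ∈ _
      rw [map_smul]; exact Submodule.smul_mem _ _ ha
  have hinj : Function.Injective (p ∘ₗ X.subtype) := by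
    rw [← LinearMap.ker_eq_bot, LinearMap.ker_eq_bot']
    intro m hm
    have hmx : (m : Ext n) ∈ U := m.2.1
    have hpm : p (m : Ext n) = 0 := hm
    have heq : (m : Ext n) = q (m : Ext n) := by
      conv_lhs => rw [← hpq (m : Ext n)]
      rw [hpm, zero_add]
    have hmem : (m : Ext n) ∈ Submodule.span ℝ (bS f '' ((↑s : Set (Finset (Fin n)))ᶜ)) := by
      rw [heq]; exact hqmem _
    exact Subtype.ext (Submodule.disjoint_def.mp hdisj _ hmx hmem)
  have hfr : Module.finrank ℝ X = Module.finrank ℝ (Submodule.map p X) := by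
    rw [← LinearMap.finrank_range_of_inj hinj, LinearMap.range_comp, Submodule.range_subtype]
  have hmaple : Submodule.map p X ≤ Submodule.span ℝ
      (((s.filter (fun T => K ⊆ T)).image (bS f) : Finset (Ext n)) : Set (Ext n)) := by
    have h1 : Submodule.map p X ≤ Submodule.map p
        (Submodule.span ℝ (bS f '' {T : Finset (Fin n) | K ⊆ T})) :=
      Submodule.map_mono inf_le_right
    rw [Submodule.map_span] at h1
    refine h1.trans (Submodule.span_le.mpr ?_)
    rintro y ⟨z, ⟨T, hT, rfl⟩, rfl⟩
    rw [SetLike.mem_coe]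
    have hpT : p (bS f T) = if T ∈ s then bS f T else 0 := by
      rw [show bS f T = BB f T from (BB_apply f T).symm, hp, Module.Basis.constr_basis]
      split
      · rw [BB_apply]
      · rfl
    rw [hpT]
    by_cases hTs : T ∈ s
    · rw [if_pos hTs]
      refine Submodule.subset_span ?_
      rw [Finset.coe_image]
      exact ⟨T, by simp [Finset.mem_filter, hTs, hT.out], rfl⟩
    · rw [if_neg hTs]; exact Submodule.zero_mem _
  have hlast : Module.finrank ℝ (Submodule.span ℝ
      (((s.filter (fun T => K ⊆ T)).image (bS f) : Finset (Ext n)) : Set (Ext n)))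
      ≤ ((s.filter (fun T => K ⊆ T)).image (bS f)).card := finrank_span_finset_le_card _
  calc Module.finrank ℝ ↥X = Module.finrank ℝ (Submodule.map p X) := hfr
    _ ≤ _ := Submodule.finrank_mono hmaple
    _ ≤ ((s.filter (fun T => K ⊆ T)).image (bS f)).card := hlast
    _ ≤ (s.filter (fun T => K ⊆ T)).card := Finset.card_image_le

lemma sum_count (d r' : ℕ) (s : Finset (Finset (Fin n))) (hs : ∀ T ∈ s, T.card = r' + d) :
    ∑ K ∈ Finset.powersetCard d (Finset.univ : Finset (Fin n)),
      (s.filter (fun T => K ⊆ T)).card = s.card * (r' + d).choose d := by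
  classical
  have h1 : ∀ (t : Finset (Finset (Fin n))) (p : Finset (Fin n) → Prop) [DecidablePred p],
      (t.filter p).card = ∑ T ∈ t, if p T then 1 else 0 := by
    intro t p _
    rw [Finset.card_eq_sum_ones, Finset.sum_filter]
  calc ∑ K ∈ Finset.powersetCard d (Finset.univ : Finset (Fin n)),
        (s.filter (fun T => K ⊆ T)).card
      = ∑ K ∈ Finset.powersetCard d (Finset.univ : Finset (Fin n)),
          ∑ T ∈ s, if K ⊆ T then 1 else 0 :=
        Finset.sum_congr rfl fun K _ => h1 s (fun T => K ⊆ T)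
    _ = ∑ T ∈ s, ∑ K ∈ Finset.powersetCard d (Finset.univ : Finset (Fin n)),
          if K ⊆ T then 1 else 0 := Finset.sum_comm
    _ = ∑ T ∈ s, (r' + d).choose d := by
        refine Finset.sum_congr rfl fun T hT => ?_
        rw [← h1 _ (fun K => K ⊆ T)]
        have hfe : (Finset.powersetCard d (Finset.univ : Finset (Fin n))).filter
            (fun K => K ⊆ T) = T.powersetCard d := by
          ext K
          simp only [Finset.mem_filter, Finset.mem_powersetCard]
          constructor
          · rintro ⟨⟨-, hc⟩, hKT⟩; exact ⟨hKT, hc⟩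
          · rintro ⟨hKT, hc⟩; exact ⟨⟨Finset.subset_univ K, hc⟩, hKT⟩
        rw [hfe, Finset.card_powersetCard, hs T hT]
    _ = s.card * (r' + d).choose d := by rw [Finset.sum_const, smul_eq_mul]

end WedgeAux

end AuxExt

set_option maxHeartbeats 1000000

noncomputable section MainAux

open ExteriorAlgebra Submodule WedgeAux

variable {n : ℕ} {F : Matrix (Fin n) (Fin n) ℝ}

/-- The linear automorphism of `ℝ^n` given by the invertible matrix `F`. -/
def eqF (hF : IsUnit F) : (Fin n → ℝ) ≃ₗ[ℝ] (Fin n → ℝ) :=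
  LinearEquiv.ofLinear (Matrix.toLin' F) (Matrix.toLin' F⁻¹)
    (by rw [← Matrix.toLin'_mul, Matrix.mul_nonsing_inv F
        ((Matrix.isUnit_iff_isUnit_det F).mp hF), Matrix.toLin'_one])
    (by rw [← Matrix.toLin'_mul, Matrix.nonsing_inv_mul F
        ((Matrix.isUnit_iff_isUnit_det F).mp hF), Matrix.toLin'_one])

/-- The basis of `ℝ^n` given by the columns of `F`. -/
def fB (hF : IsUnit F) : Module.Basis (Fin n) ℝ (Fin n → ℝ) :=
  (Pi.basisFun ℝ (Fin n)).map (eqF hF)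

lemma projMap_fB (hF : IsUnit F) (J : Finset (Fin n)) (j : Fin n) :
    projMap n F J (fB hF j) = if j ∈ J then fB hF j else 0 := by
  classical
  have hfj : fB hF j = Matrix.toLin' F (Pi.single j 1) := by
    rw [fB, Module.Basis.map_apply, Pi.basisFun_apply]
    rfl
  have hDv : (Matrix.diagonal (fun j => if j ∈ J then (1 : ℝ) else 0)).mulVec
        (Pi.single (M := fun _ : Fin n => ℝ) j 1)
      = (if j ∈ J then (1 : ℝ) else 0) • Pi.single (M := fun _ : Fin n => ℝ) j 1 := by
    rw [Matrix.mulVec_single]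
    funext i
    by_cases hij : i = j
    · subst hij
      simp [Matrix.diagonal_apply_eq]
    · simp [Matrix.diagonal_apply_ne _ hij, Pi.single_eq_of_ne hij]
  have hstep : projMap n F J (fB hF j)
      = Matrix.toLin' (F * Matrix.diagonal (fun j => if j ∈ J then (1 : ℝ) else 0))
          (Pi.single j 1) := by
    rw [projMap, hfj, ← LinearMap.comp_apply, ← Matrix.toLin'_mul]
    congr 2
    rw [Matrix.mul_assoc, Matrix.nonsing_inv_mul F ((Matrix.isUnit_iff_isUnit_det F).mp hF),
      Matrix.mul_one]
  have hDv' : Matrix.toLin' (Matrix.diagonal (fun j => if j ∈ J then (1 : ℝ) else 0))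
      (Pi.single (M := fun _ : Fin n => ℝ) j 1)
      = (if j ∈ J then (1 : ℝ) else 0) • Pi.single (M := fun _ : Fin n => ℝ) j 1 := by
    rw [Matrix.toLin'_apply, hDv]
  rw [hstep, Matrix.toLin'_mul, LinearMap.comp_apply, hDv', map_smul, ← hfj]
  split
  · rw [one_smul]
  · rw [zero_smul]

lemma mapProj_bS (hF : IsUnit F) (J : Finset (Fin n)) (S : Finset (Fin n)) :
    ExteriorAlgebra.map (projMap n F J) (bS (fB hF) S)
      = if S ⊆ J then bS (fB hF) S else 0 := by
  classical
  have hprod : ExteriorAlgebra.map (projMap n F J) (bS (fB hF) S)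
      = ((S.sort (· ≤ ·)).map fun i =>
          ExteriorAlgebra.map (projMap n F J) (ι ℝ (fB hF i))).prod := by
    rw [bS, mL, map_list_prod, List.map_map]
    rfl
  have hfac : ∀ i : Fin n, ExteriorAlgebra.map (projMap n F J) (ι ℝ (fB hF i))
      = if i ∈ J then ι ℝ (fB hF i) else 0 := by
    intro i
    rw [ExteriorAlgebra.map_apply_ι, projMap_fB hF]
    split
    · rfl
    · exact map_zero _
  by_cases hSJ : S ⊆ J
  · rw [if_pos hSJ, hprod, bS, mL]
    congr 1
    refine List.map_congr_left fun i hi => ?_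
    rw [hfac i, if_pos (hSJ ((Finset.mem_sort _).mp hi))]
  · rw [if_neg hSJ, hprod]
    obtain ⟨j, hjS, hjJ⟩ := Finset.not_subset.mp hSJ
    refine List.prod_eq_zero ?_
    refine List.mem_map.mpr ⟨j, (Finset.mem_sort _).mpr hjS, ?_⟩
    rw [hfac j, if_neg hjJ]

lemma projImage_le_inter (hF : IsUnit F) {d : ℕ} (hdn : d ≤ n)
    (W : Submodule ℝ (ExteriorAlgebra ℝ (Fin n → ℝ)))
    (J : Finset (Fin n)) (hJc : J.card = n - d) :
    Module.finrank ℝ (projImage n F J W)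
      ≤ Module.finrank ℝ ↥((W * ⋀[ℝ]^d (Fin n → ℝ)) ⊓
          Submodule.span ℝ (bS (fB hF) '' {T : Finset (Fin n) | Jᶜ ⊆ T})) := by
  classical
  haveI := finiteDimensional_Ext n
  have hKcard : (Jᶜ : Finset (Fin n)).card = d := by
    rw [Finset.card_compl, hJc, Fintype.card_fin]
    omega
  set μ : ExteriorAlgebra ℝ (Fin n → ℝ) →ₗ[ℝ] ExteriorAlgebra ℝ (Fin n → ℝ) :=
    LinearMap.mulRight ℝ (bS (fB hF) Jᶜ) with hμ
  have hμapp : ∀ x, μ x = x * bS (fB hF) Jᶜ := fun x => rfl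
  -- (i) μ ∘ P = μ
  have hcomp : μ ∘ₗ (ExteriorAlgebra.map (projMap n F J)).toLinearMap = μ := by
    refine (BB (fB hF)).ext fun S => ?_
    rw [LinearMap.comp_apply, AlgHom.toLinearMap_apply, BB_apply, mapProj_bS hF J S]
    by_cases hSJ : S ⊆ J
    · rw [if_pos hSJ]
    · rw [if_neg hSJ, map_zero, hμapp]
      symm
      apply bS_mul_bS_of_not_disjoint
      obtain ⟨j, hjS, hjJ⟩ := Finset.not_subset.mp hSJ
      exact fun hd => (Finset.disjoint_left.mp hd hjS) (Finset.mem_compl.mpr hjJ)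
  -- (ii) the image of the projection lies in the span of monomials with S ⊆ J
  have hXle : projImage n F J W
      ≤ Submodule.span ℝ (bS (fB hF) '' {S : Finset (Fin n) | S ⊆ J}) := by
    have hall : ∀ y : ExteriorAlgebra ℝ (Fin n → ℝ),
        ExteriorAlgebra.map (projMap n F J) y
          ∈ Submodule.span ℝ (bS (fB hF) '' {S : Finset (Fin n) | S ⊆ J}) := by
      intro y
      have hy : y ∈ Submodule.span ℝ (Set.range (BB (fB hF))) := Module.Basis.mem_span _ y
      refine Submodule.span_induction (p := fun z _ =>
        ExteriorAlgebra.map (projMap n F J) z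
          ∈ Submodule.span ℝ (bS (fB hF) '' {S : Finset (Fin n) | S ⊆ J})) ?_ ?_ ?_ ?_ hy
      · rintro z ⟨S, rfl⟩
        show ExteriorAlgebra.map (projMap n F J) (BB (fB hF) S) ∈ _
        rw [BB_apply, mapProj_bS hF J S]
        by_cases hSJ : S ⊆ J
        · rw [if_pos hSJ]
          exact Submodule.subset_span ⟨S, hSJ, rfl⟩
        · rw [if_neg hSJ]
          exact Submodule.zero_mem _
      · show ExteriorAlgebra.map (projMap n F J) 0 ∈ _
        rw [map_zero]; exact Submodule.zero_mem _
      · intro a b _ _ ha hb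
        show ExteriorAlgebra.map (projMap n F J) (a + b) ∈ _
        rw [map_add]; exact Submodule.add_mem _ ha hb
      · intro c a _ ha
        show ExteriorAlgebra.map (projMap n F J) (c • a) ∈ _
        rw [map_smul]; exact Submodule.smul_mem _ _ ha
    rintro x ⟨w, hwW, rfl⟩
    exact hall w
  -- (iii) left inverse of μ on that span
  have hchoice : ∀ T : Finset (Fin n), ∃ c : ℝ, c * c = 1 ∧
      bS (fB hF) (T \ Jᶜ) * bS (fB hF) Jᶜ = c • bS (fB hF) ((T \ Jᶜ) ∪ Jᶜ) :=
    fun T => bS_mul_bS_of_disjoint (fB hF) Finset.sdiff_disjoint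
  choose cc hcc1 hcc2 using hchoice
  set ν : ExteriorAlgebra ℝ (Fin n → ℝ) →ₗ[ℝ] ExteriorAlgebra ℝ (Fin n → ℝ) :=
    (BB (fB hF)).constr ℝ (fun T => if Jᶜ ⊆ T then cc T • bS (fB hF) (T \ Jᶜ) else 0) with hν
  have hν1 : ∀ S : Finset (Fin n), Disjoint S Jᶜ →
      ν (bS (fB hF) S * bS (fB hF) Jᶜ) = bS (fB hF) S := by
    intro S hSK
    have hTS : (S ∪ Jᶜ) \ Jᶜ = S := Finset.union_sdiff_cancel_right hSK
    have h2 := hcc2 (S ∪ Jᶜ)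
    rw [hTS] at h2
    rw [h2, map_smul, show bS (fB hF) (S ∪ Jᶜ) = BB (fB hF) (S ∪ Jᶜ) from (BB_apply _ _).symm,
      hν, Module.Basis.constr_basis, if_pos Finset.subset_union_right, hTS, smul_smul, hcc1, one_smul]
  have hinv : ∀ x ∈ Submodule.span ℝ (bS (fB hF) '' {S : Finset (Fin n) | S ⊆ J}),
      ν (μ x) = x := by
    intro x hx
    refine Submodule.span_induction (p := fun z _ => ν (μ z) = z) ?_ ?_ ?_ ?_ hx
    · rintro z ⟨S, hS, rfl⟩
      show ν (μ (bS (fB hF) S)) = bS (fB hF) S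
      rw [hμapp]
      refine hν1 S ?_
      exact (disjoint_compl_right : Disjoint J (Jᶜ : Finset (Fin n))).mono_left hS
    · show ν (μ 0) = 0
      rw [map_zero, map_zero]
    · intro a b _ _ ha hb
      show ν (μ (a + b)) = a + b
      rw [map_add, map_add, ha, hb]
    · intro c a _ ha
      show ν (μ (c • a)) = c • a
      rw [map_smul, map_smul, ha]
  have hinj : Function.Injective (μ ∘ₗ (projImage n F J W).subtype) := by
    intro a b hab
    have ha := hinv _ (hXle a.2)
    have hb := hinv _ (hXle b.2)
    apply Subtype.ext
    rw [← ha, ← hb]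
    exact congrArg ν hab
  have hfr1 : Module.finrank ℝ (projImage n F J W)
      = Module.finrank ℝ (Submodule.map μ (projImage n F J W)) := by
    rw [← LinearMap.finrank_range_of_inj hinj, LinearMap.range_comp, Submodule.range_subtype]
  have hmapeq : Submodule.map μ (projImage n F J W) = Submodule.map μ W := by
    rw [projImage, ← Submodule.map_comp, hcomp]
  have hle2 : Submodule.map μ W ≤ (W * ⋀[ℝ]^d (Fin n → ℝ)) ⊓
      Submodule.span ℝ (bS (fB hF) '' {T : Finset (Fin n) | Jᶜ ⊆ T}) := by
    refine le_inf ?_ ?_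
    · rintro x ⟨w, hwW, rfl⟩
      rw [hμapp]
      have hbk : bS (fB hF) Jᶜ ∈ ⋀[ℝ]^d (Fin n → ℝ) := by
        have := bS_mem_pow (fB hF) Jᶜ
        rwa [hKcard] at this
      exact Submodule.mul_mem_mul hwW hbk
    · rintro x ⟨w, hwW, rfl⟩
      have hall : ∀ y : ExteriorAlgebra ℝ (Fin n → ℝ),
          μ y ∈ Submodule.span ℝ (bS (fB hF) '' {T : Finset (Fin n) | Jᶜ ⊆ T}) := by
        intro y
        have hy : y ∈ Submodule.span ℝ (Set.range (BB (fB hF))) := Module.Basis.mem_span _ y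
        refine Submodule.span_induction (p := fun z _ =>
          μ z ∈ Submodule.span ℝ (bS (fB hF) '' {T : Finset (Fin n) | Jᶜ ⊆ T})) ?_ ?_ ?_ ?_ hy
        · rintro z ⟨S, rfl⟩
          show μ (BB (fB hF) S) ∈ _
          rw [BB_apply, hμapp]
          by_cases hd : Disjoint S (Jᶜ : Finset (Fin n))
          · obtain ⟨c, -, hc⟩ := bS_mul_bS_of_disjoint (fB hF) hd
            rw [hc]
            exact Submodule.smul_mem _ _
              (Submodule.subset_span ⟨S ∪ Jᶜ, Finset.subset_union_right, rfl⟩)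
          · rw [bS_mul_bS_of_not_disjoint (fB hF) hd]
            exact Submodule.zero_mem _
        · show μ 0 ∈ _
          rw [map_zero]; exact Submodule.zero_mem _
        · intro a b _ _ ha hb
          show μ (a + b) ∈ _
          rw [map_add]; exact Submodule.add_mem _ ha hb
        · intro c a _ ha
          show μ (c • a) ∈ _
          rw [map_smul]; exact Submodule.smul_mem _ _ ha
      exact hall w
  calc Module.finrank ℝ (projImage n F J W)
      = Module.finrank ℝ (Submodule.map μ (projImage n F J W)) := hfr1
    _ = Module.finrank ℝ (Submodule.map μ W) := by rw [hmapeq]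
    _ ≤ _ := Submodule.finrank_mono hle2

end MainAux

/-- For `0 < r ≤ n - d`, `W ⊆ ⋀^r ℝ^n` and invertible `F`, the dimensional fraction of
`W ∧ ⋀^d V` is at least the average over `J` of size `n - d` of the dimensional
fractions of the projections `π^F_J(W)`. -/
theorem wedge_fraction_ge_average_projection (n r d : ℕ) (hr : 0 < r) (hrd : r ≤ n - d)
    (W : Submodule ℝ (ExteriorAlgebra ℝ (Fin n → ℝ)))
    (hWle : W ≤ ⋀[ℝ]^r (Fin n → ℝ))
    (F : Matrix (Fin n) (Fin n) ℝ) (hF : IsUnit F) :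
    (Module.finrank ℝ ↥(W * ⋀[ℝ]^d (Fin n → ℝ)) : ℝ) / (n.choose (r + d)) ≥
      (1 / (n.choose (n - d) : ℝ)) *
        ∑ J ∈ Finset.powersetCard (n - d) (Finset.univ : Finset (Fin n)),
          (Module.finrank ℝ (projImage n F J W) : ℝ) / ((n - d).choose r) := by
  classical
  haveI := WedgeAux.finiteDimensional_Ext n
  have hdn : d < n := by omega
  have hrdn : r + d ≤ n := by omega
  have hUspan : W * ⋀[ℝ]^d (Fin n → ℝ) ≤ Submodule.span ℝ
      (WedgeAux.bS (fB hF) '' {T : Finset (Fin n) | T.card = r + d}) := by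
    have h1 : W * ⋀[ℝ]^d (Fin n → ℝ) ≤ (⋀[ℝ]^r (Fin n → ℝ)) * ⋀[ℝ]^d (Fin n → ℝ) :=
      mul_le_mul' hWle le_rfl
    have h2 : (⋀[ℝ]^r (Fin n → ℝ)) * ⋀[ℝ]^d (Fin n → ℝ) = ⋀[ℝ]^(r + d) (Fin n → ℝ) :=
      (pow_add _ r d).symm
    exact (h1.trans_eq h2).trans (WedgeAux.pow_le_span (fB hF) (r + d))
  obtain ⟨s, hsI, hscard, hsdisj⟩ := WedgeAux.pivot_lemma (fB hF)
    (Module.finrank ℝ ↥(W * ⋀[ℝ]^d (Fin n → ℝ))) (W * ⋀[ℝ]^d (Fin n → ℝ)) _ rfl hUspan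
  have hcardT : ∀ T ∈ s, T.card = r + d := fun T hT => hsI (Finset.mem_coe.mpr hT)
  have hkey : ∑ J ∈ Finset.powersetCard (n - d) (Finset.univ : Finset (Fin n)),
      Module.finrank ℝ (projImage n F J W)
      ≤ Module.finrank ℝ ↥(W * ⋀[ℝ]^d (Fin n → ℝ)) * (r + d).choose d := by
    have hstep : ∀ J ∈ Finset.powersetCard (n - d) (Finset.univ : Finset (Fin n)),
        Module.finrank ℝ (projImage n F J W) ≤ (s.filter (fun T => Jᶜ ⊆ T)).card := by
      intro J hJ
      have hJc : J.card = n - d := Finset.mem_powersetCard_univ.mp hJ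
      exact (projImage_le_inter hF hdn.le W J hJc).trans
        (WedgeAux.count_lemma (fB hF) _ s hsdisj Jᶜ)
    calc ∑ J ∈ Finset.powersetCard (n - d) (Finset.univ : Finset (Fin n)),
          Module.finrank ℝ (projImage n F J W)
        ≤ ∑ J ∈ Finset.powersetCard (n - d) (Finset.univ : Finset (Fin n)),
            (s.filter (fun T => Jᶜ ⊆ T)).card := Finset.sum_le_sum hstep
      _ = ∑ K ∈ Finset.powersetCard d (Finset.univ : Finset (Fin n)),
            (s.filter (fun T => K ⊆ T)).card := by
          refine Finset.sum_nbij' (fun J => Jᶜ) (fun K => Kᶜ) ?_ ?_ ?_ ?_ ?_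
          · intro J hJ
            rw [Finset.mem_powersetCard_univ] at hJ ⊢
            rw [Finset.card_compl, hJ, Fintype.card_fin]
            omega
          · intro K hK
            rw [Finset.mem_powersetCard_univ] at hK ⊢
            rw [Finset.card_compl, hK, Fintype.card_fin]
          · intro J _
            exact compl_compl J
          · intro K _
            exact compl_compl K
          · intro J _
            rfl
      _ = s.card * (r + d).choose d := WedgeAux.sum_count d r s hcardT
      _ ≤ _ := Nat.mul_le_mul_right _ hscard
  have hC1 : (0:ℝ) < (n.choose (r + d) : ℝ) := by exact_mod_cast Nat.choose_pos hrdn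
  have hC3 : (0:ℝ) < ((n - d).choose r : ℝ) := by exact_mod_cast Nat.choose_pos hrd
  have hC2 : (0:ℝ) < (n.choose (n - d) : ℝ) := by exact_mod_cast Nat.choose_pos (Nat.sub_le n d)
  have hC4 : (0:ℝ) < ((r + d).choose d : ℝ) := by
    exact_mod_cast Nat.choose_pos (Nat.le_add_left d r)
  have hid : n.choose (n - d) * (n - d).choose r = n.choose (r + d) * (r + d).choose d := by
    have h := Nat.choose_mul (n := n) (show d ≤ r + d from Nat.le_add_left d r)
    rw [Nat.add_sub_cancel] at h
    rw [Nat.choose_symm hdn.le]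
    exact h.symm
  rw [ge_iff_le, ← Finset.sum_div]
  have hA : (∑ J ∈ Finset.powersetCard (n - d) (Finset.univ : Finset (Fin n)),
      (Module.finrank ℝ (projImage n F J W) : ℝ))
      ≤ (Module.finrank ℝ ↥(W * ⋀[ℝ]^d (Fin n → ℝ)) : ℝ) * ((r + d).choose d : ℝ) := by
    exact_mod_cast hkey
  set A := ∑ J ∈ Finset.powersetCard (n - d) (Finset.univ : Finset (Fin n)),
      (Module.finrank ℝ (projImage n F J W) : ℝ) with hAdef
  set D := (Module.finrank ℝ ↥(W * ⋀[ℝ]^d (Fin n → ℝ)) : ℝ) with hDdef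
  have hA0 : 0 ≤ A := by
    rw [hAdef]
    exact Finset.sum_nonneg fun J _ => by positivity
  have heq1 : 1 / (n.choose (n - d) : ℝ) * (A / ((n - d).choose r : ℝ))
      = A / ((n.choose (n - d) : ℝ) * ((n - d).choose r : ℝ)) := by
    field_simp
  rw [heq1]
  have heq2 : ((n.choose (n - d) : ℝ)) * ((n - d).choose r : ℝ)
      = (n.choose (r + d) : ℝ) * ((r + d).choose d : ℝ) := by exact_mod_cast hid
  rw [heq2, div_le_div_iff₀ (by positivity) hC1]
  calc A * (n.choose (r + d) : ℝ)
      ≤ (D * ((r + d).choose d : ℝ)) * (n.choose (r + d) : ℝ) :=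
        mul_le_mul_of_nonneg_right hA hC1.le
    _ = D * ((n.choose (r + d) : ℝ) * ((r + d).choose d : ℝ)) := by ring
end
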